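/- arXiv:1703.08306 — 9 statements merged into one kernel-verified Lean document; each statement's English description precedes it below -/
import Mathlib

section
/- Let n, k ≥ 1 and let f₁, …, f_{k+1} : (Fin k → (Fin n → ZMod 2)) → (Fin n → ZMod 2) be arbitrary round functions. Let x_p = (L_p⁰, R₁⁰, …, R_k⁰) and x_q = (L_q⁰, R₁⁰, …, R_k⁰) be two initial states of the kn:n-UFN that agree in all source blocks R₁⁰, …, R_k⁰ and differ only in the first block. Then the first blocks of the states after k+1 rounds satisfy L_p^{k+1} ⊕ L_q^{k+1} = L_p⁰ ⊕ L_q⁰. -/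
/-- An `n`-bit block, i.e. a bit string of length `n`. -/
abbrev Blk (n : ℕ) : Type := Fin n → ZMod 2

/-- The state of a `(k+1)`-block Feistel network: `k+1` blocks of `n` bits each. -/
abbrev St (n k : ℕ) : Type := Fin (k + 1) → Blk n

/-- A round function of a source-heavy `kn:n`-UFN: input `kn` bits, output `n` bits. -/
abbrev SrcRF (n k : ℕ) : Type := (Fin k → Blk n) → Blk n

/-- One round of the `kn:n`-UFN: `(L, R₁, …, R_k) ↦ (R₁, …, R_k, L ⊕ f (R₁, …, R_k))`.
The state coordinate `0` is `L` and coordinate `j` (for `1 ≤ j ≤ k`) is `R_j`. -/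
def ufnRound {n k : ℕ} (f : SrcRF n k) (s : St n k) : St n k :=
  fun i =>
    if h : (i : ℕ) < k then s ⟨(i : ℕ) + 1, by omega⟩
    else s 0 + f (fun j => s j.succ)

/-- The `r`-round `kn:n`-UFN with round functions `f 0, …, f (r-1)`, applied with `f 0` first. -/
def ufnRun {n k : ℕ} : (r : ℕ) → (Fin r → SrcRF n k) → St n k → St n k
  | 0, _, s => s
  | r + 1, f, s => ufnRound (f (Fin.last r)) (ufnRun r (fun i => f i.castSucc) s)


lemma ufn_aux {n k : ℕ} : ∀ m, m ≤ k → ∀ (f : Fin (m + 1) → SrcRF n k) (s : St n k),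
    ufnRun (m + 1) f s ⟨k - m, by omega⟩ = s 0 + f 0 (fun j => s j.succ) := by
  intro m
  induction m with
  | zero =>
    intro _ f s
    show ufnRound (f (Fin.last 0)) (ufnRun 0 _ s) _ = _
    simp only [ufnRun, ufnRound, Nat.sub_zero]
    rw [dif_neg (by simp)]
    rfl
  | succ m ih =>
    intro hm f s
    show ufnRound (f (Fin.last (m+1))) (ufnRun (m+1) (fun i => f i.castSucc) s) _ = _
    rw [ufnRound]
    rw [dif_pos (by simp; omega)]
    have : (⟨(k - (m+1) : ℕ) + 1, by omega⟩ : Fin (k+1)) = ⟨k - m, by omega⟩ := by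
      ext; simp; omega
    rw [this, ih (by omega)]
    rfl

/-- If two initial states of the `kn:n`-UFN agree in all source blocks
`R₁⁰, …, R_k⁰` and differ only in the first block `L⁰`, then after `k+1` rounds the first
blocks satisfy `L_p^{k+1} ⊕ L_q^{k+1} = L_p⁰ ⊕ L_q⁰` (for arbitrary round functions). -/
theorem ufn_k_add_one_rounds_linear_relation (n k : ℕ) (hn : 1 ≤ n) (hk : 1 ≤ k)
    (f : Fin (k + 1) → SrcRF n k) (xp xq : St n k)
    (hR : ∀ j : Fin (k + 1), j ≠ 0 → xp j = xq j) (hL : xp 0 ≠ xq 0) :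
    ufnRun (k + 1) f xp 0 + ufnRun (k + 1) f xq 0 = xp 0 + xq 0 := by
  have hp := ufn_aux k le_rfl f xp
  have hq := ufn_aux k le_rfl f xq
  have h0 : (⟨k - k, by omega⟩ : Fin (k+1)) = 0 := by ext; simp
  rw [h0] at hp hq
  rw [hp, hq]
  have hF : (fun j : Fin k => xp j.succ) = (fun j : Fin k => xq j.succ) := by
    funext j; exact hR j.succ (Fin.succ_ne_zero j)
  rw [hF]
  funext i
  simp only [Pi.add_apply]
  have h2 : ∀ a : ZMod 2, a + a = 0 := CharTwo.add_self_eq_zero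
  have := h2 (f 0 (fun j => xq j.succ) i)
  linear_combination this
end

section
/- Let n, k ≥ 1, let S = (Fin (k+1)) → (Fin n → ZMod 2) be the state space of (k+1)n-bit strings, and let x_p ≠ x_q be two fixed states whose last k blocks agree (they differ only in the first block). For a uniformly random permutation π of S, the probability that the first block of π(x_p) XORed with the first block of π(x_q) equals the XOR of the first blocks of x_p and x_q is exactly 2^{kn} / (2^{(k+1)n} − 1). Equivalently, the number of permutations π of S satisfying this relation, multiplied by (2^{(k+1)n} − 1), equals 2^{kn} times the total number of permutations of S. -/
open Finset

lemma aux_exists_perm {α : Type*} [DecidableEq α] {a b a' b' : α}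
    (hab : a ≠ b) (hab' : a' ≠ b') :
    ∃ σ : Equiv.Perm α, σ a = a' ∧ σ b = b' := by
  refine ⟨Equiv.swap (Equiv.swap a a' b) b' * Equiv.swap a a', ?_, ?_⟩
  · have h1 : Equiv.swap a a' a = a' := Equiv.swap_apply_left a a'
    have h2 : a' ≠ Equiv.swap a a' b := by
      have h3 := (Equiv.swap a a').injective.ne hab
      rwa [h1] at h3
    simp only [Equiv.Perm.mul_apply, h1]
    exact Equiv.swap_apply_of_ne_of_ne h2 hab'
  · simp only [Equiv.Perm.mul_apply]
    exact Equiv.swap_apply_left _ _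

lemma aux_fiber_card {α : Type*} [Fintype α] [DecidableEq α] (x y : α) {a b a' b' : α}
    (hab : a ≠ b) (hab' : a' ≠ b') :
    (Finset.univ.filter fun π : Equiv.Perm α => π x = a ∧ π y = b).card =
    (Finset.univ.filter fun π : Equiv.Perm α => π x = a' ∧ π y = b').card := by
  obtain ⟨σ, h1, h2⟩ := aux_exists_perm hab hab'
  apply Finset.card_nbij' (fun π => σ * π) (fun π => σ⁻¹ * π)
  · intro π hπ
    simp only [mem_coe, mem_filter, mem_univ, true_and] at hπ ⊢
    simp [Equiv.Perm.mul_apply, hπ.1, hπ.2, h1, h2]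
  · intro π hπ
    simp only [mem_coe, mem_filter, mem_univ, true_and] at hπ ⊢
    simp [Equiv.Perm.mul_apply, hπ.1, hπ.2, ← h1, ← h2]
  · intro π _; simp [mul_assoc]
  · intro π _; simp [← mul_assoc]


/-- Let `x_p ≠ x_q` be two states whose last `k` blocks agree (they differ
only in the first block).  For a uniformly random permutation `π` of the state space `St n k`,
the probability that `(π x_p) 0 ⊕ (π x_q) 0 = x_p 0 ⊕ x_q 0` is exactly
`2^{kn} / (2^{(k+1)n} − 1)`; equivalently, the number of such permutations multiplied by
`2^{(k+1)n} − 1` equals `2^{kn}` times the total number of permutations. -/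
theorem random_perm_first_block_xor_relation (n k : ℕ) (hn : 1 ≤ n) (hk : 1 ≤ k)
    (xp xq : St n k) (hne : xp ≠ xq)
    (hR : ∀ j : Fin (k + 1), j ≠ 0 → xp j = xq j) :
    (((Finset.univ.filter (fun π : Equiv.Perm (St n k) =>
          π xp 0 + π xq 0 = xp 0 + xq 0)).card : ℝ) /
        (Fintype.card (Equiv.Perm (St n k)) : ℝ) =
      (2 : ℝ) ^ (k * n) / ((2 : ℝ) ^ ((k + 1) * n) - 1)) ∧
    (Finset.univ.filter (fun π : Equiv.Perm (St n k) =>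
        π xp 0 + π xq 0 = xp 0 + xq 0)).card * (2 ^ ((k + 1) * n) - 1) =
      2 ^ (k * n) * Fintype.card (Equiv.Perm (St n k)) := by
  classical
  set N : ℕ := 2 ^ ((k + 1) * n) with hN
  have hcardBlk : Fintype.card (Blk n) = 2 ^ n := by
    simp [Blk]
  have hcardS : Fintype.card (St n k) = N := by
    rw [hN]
    simp only [St, Fintype.card_fun, hcardBlk, Fintype.card_fin]
    rw [← pow_mul, mul_comm n (k+1)]
  have hxq0 : xp 0 ≠ xq 0 := by
    intro h
    apply hne
    funext j
    by_cases hj : j = 0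
    · rw [hj]; exact h
    · exact hR j hj
  -- in char 2, u + u = 0
  have hadd_self : ∀ u : Blk n, u + u = 0 := by
    intro u; funext i
    exact CharTwo.add_self_eq_zero (u i)
  have hc_ne : xp 0 + xq 0 ≠ 0 := by
    intro h
    apply hxq0
    have h2 : xq 0 = xp 0 := by
      simpa [← add_assoc, hadd_self] using congrArg (fun u => xp 0 + u) h
    exact h2.symm
  set m : ℕ := (Finset.univ.filter fun π : Equiv.Perm (St n k) => π xp = xp ∧ π xq = xq).card with hm
  have hfiber : ∀ a b : St n k, a ≠ b →
      (Finset.univ.filter fun π : Equiv.Perm (St n k) => π xp = a ∧ π xq = b).card = m :=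
    fun a b h => aux_fiber_card xp xq h hne
  set G : Finset (St n k × St n k) :=
    Finset.univ.filter (fun ab => ab.1 0 + ab.2 0 = xp 0 + xq 0) with hG
  have hGdistinct : ∀ ab ∈ G, ab.1 ≠ ab.2 := by
    intro ab hab heq
    rw [hG, Finset.mem_filter] at hab
    apply hc_ne
    rw [← hab.2, heq, hadd_self]
  have hGcard : G.card = N * 2 ^ (k * n) := by
    have h1 : G.card = Fintype.card (St n k × (Fin k → Blk n)) := by
      rw [← Finset.card_univ]
      apply Finset.card_nbij' (fun ab => (ab.1, fun j : Fin k => ab.2 j.succ))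
        (fun at' : St n k × (Fin k → Blk n) => (at'.1, Fin.cons (at'.1 0 + (xp 0 + xq 0)) at'.2))
      · intro ab _; exact Finset.mem_univ _
      · intro at' _
        rw [hG, Finset.mem_coe, Finset.mem_filter]
        refine ⟨Finset.mem_univ _, ?_⟩
        simp only [Fin.cons_zero, ← add_assoc, hadd_self, zero_add]
      · intro ab hab
        rw [hG, Finset.mem_coe, Finset.mem_filter] at hab
        have hb0 : ab.2 0 = ab.1 0 + (xp 0 + xq 0) := by
          have h2 := congrArg (fun u => ab.1 0 + u) hab.2
          simpa [← add_assoc, hadd_self] using h2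
        refine Prod.ext rfl ?_
        show Fin.cons (ab.1 0 + (xp 0 + xq 0)) (fun j : Fin k => ab.2 j.succ) = ab.2
        funext j
        refine Fin.cases ?_ (fun i => ?_) j
        · rw [Fin.cons_zero, ← hb0]
        · rw [Fin.cons_succ]
      · intro at' _
        refine Prod.ext rfl ?_
        funext j
        simp only [Fin.cons_succ]
    rw [h1, Fintype.card_prod, hcardS]
    congr 1
    simp only [Fintype.card_fun, hcardBlk, Fintype.card_fin]
    rw [← pow_mul, mul_comm n k]
  have hfilter : (Finset.univ.filter (fun π : Equiv.Perm (St n k) =>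
      π xp 0 + π xq 0 = xp 0 + xq 0)).card = G.card * m := by
    have hmap : ∀ π : Equiv.Perm (St n k),
        π ∈ Finset.univ.filter (fun π : Equiv.Perm (St n k) =>
          π xp 0 + π xq 0 = xp 0 + xq 0) → (π xp, π xq) ∈ G := by
      intro π hπ
      rw [hG, Finset.mem_filter]
      exact ⟨Finset.mem_univ _, (Finset.mem_filter.mp hπ).2⟩
    rw [Finset.card_eq_sum_card_fiberwise hmap]
    have h2 : ∀ ab ∈ G,
        ((Finset.univ.filter (fun π : Equiv.Perm (St n k) =>
          π xp 0 + π xq 0 = xp 0 + xq 0)).filter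
            (fun π => (π xp, π xq) = ab)).card = m := by
      intro ab hab
      have habG := hab
      rw [hG, Finset.mem_filter] at habG
      rw [Finset.filter_filter]
      have heq : Finset.univ.filter (fun π : Equiv.Perm (St n k) =>
          (π xp 0 + π xq 0 = xp 0 + xq 0) ∧ (π xp, π xq) = ab) =
          Finset.univ.filter (fun π : Equiv.Perm (St n k) => π xp = ab.1 ∧ π xq = ab.2) := by
        apply Finset.filter_congr
        intro π _
        constructor
        · rintro ⟨-, h⟩
          rw [Prod.ext_iff] at h
          exact h
        · rintro ⟨h1, h2⟩
          refine ⟨?_, by rw [Prod.ext_iff]; exact ⟨h1, h2⟩⟩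
          rw [h1, h2]; exact habG.2
      rw [heq]
      exact hfiber ab.1 ab.2 (hGdistinct ab hab)
    rw [Finset.sum_congr rfl h2, Finset.sum_const, smul_eq_mul]
  have htotal : Fintype.card (Equiv.Perm (St n k)) = (N * N - N) * m := by
    have hmap : ∀ π : Equiv.Perm (St n k), π ∈ (Finset.univ : Finset (Equiv.Perm (St n k))) →
        (π xp, π xq) ∈ (Finset.univ : Finset (St n k)).offDiag := by
      intro π _
      rw [Finset.mem_offDiag]
      exact ⟨Finset.mem_univ _, Finset.mem_univ _, π.injective.ne hne⟩
    rw [← Finset.card_univ, Finset.card_eq_sum_card_fiberwise hmap]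
    have h2 : ∀ ab ∈ (Finset.univ : Finset (St n k)).offDiag,
        (Finset.univ.filter (fun π : Equiv.Perm (St n k) => (π xp, π xq) = ab)).card = m := by
      intro ab hab
      rw [Finset.mem_offDiag] at hab
      have heq : Finset.univ.filter (fun π : Equiv.Perm (St n k) => (π xp, π xq) = ab) =
          Finset.univ.filter (fun π : Equiv.Perm (St n k) => π xp = ab.1 ∧ π xq = ab.2) := by
        apply Finset.filter_congr
        intro π _
        rw [Prod.ext_iff]
      rw [heq]
      exact hfiber ab.1 ab.2 hab.2.2
    rw [Finset.sum_congr rfl h2, Finset.sum_const, smul_eq_mul, Finset.offDiag_card,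
      Finset.card_univ, hcardS]
  have hN1 : 1 ≤ N := Nat.one_le_two_pow
  have hsub : N * N - N = N * (N - 1) := by
    rcases N with _ | N'
    · simp
    · have : (N' + 1) * (N' + 1) = (N' + 1) * N' + (N' + 1) := by ring
      rw [this, Nat.add_sub_cancel, Nat.succ_sub_one]
  have key : (Finset.univ.filter (fun π : Equiv.Perm (St n k) =>
        π xp 0 + π xq 0 = xp 0 + xq 0)).card * (N - 1) =
      2 ^ (k * n) * Fintype.card (Equiv.Perm (St n k)) := by
    rw [hfilter, hGcard, htotal, hsub]
    ring
  refine ⟨?_, key⟩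
  have hexp : (k + 1) * n ≠ 0 := by positivity
  have h2gt : (1 : ℝ) < 2 ^ ((k + 1) * n) := by
    apply one_lt_pow₀ (by norm_num) hexp
  have hden : ((2 : ℝ) ^ ((k + 1) * n) - 1) ≠ 0 := by linarith
  have hperm : (Fintype.card (Equiv.Perm (St n k)) : ℝ) ≠ 0 := by
    exact_mod_cast Fintype.card_pos.ne'
  rw [div_eq_div_iff hperm hden]
  have hcast := congrArg (Nat.cast : ℕ → ℝ) key
  push_cast [Nat.cast_sub (show 1 ≤ 2 ^ ((k + 1) * n) from hN1), hN] at hcast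
  linarith [hcast]
end

section
/- Let n, k, m ≥ 1 and let x₁, …, x_m be m distinct initial states of the kn:n-UFN. Draw a tuple (f₁, …, f_{k+2}) of round functions uniformly at random from all tuples of functions (Fin k → (Fin n → ZMod 2)) → (Fin n → ZMod 2). Let the BAD event ξ be: there exist a round index i with 1 ≤ i ≤ k+1 and query indices p < q such that the source parts agree, i.e. (R_{p,1}^i, …, R_{p,k}^i) = (R_{q,1}^i, …, R_{q,k}^i), where (L_p^i, R_{p,1}^i, …, R_{p,k}^i) is the state of query x_p after i rounds. Then Pr[ξ] ≤ (k+1)·m² / 2^{n+1}. -/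
/- ### Auxiliary lemmas -/

lemma blk_card (n : ℕ) : Fintype.card (Blk n) = 2 ^ n := by
  rw [Fintype.card_fun, ZMod.card, Fintype.card_fin]

lemma ufnRound_apply_lt {n k : ℕ} (f : SrcRF n k) (s : St n k) (j : Fin (k + 1))
    (h : (j : ℕ) < k) : ufnRound f s j = s ⟨(j : ℕ) + 1, by omega⟩ := dif_pos h

lemma ufnRound_apply_last {n k : ℕ} (f : SrcRF n k) (s : St n k) :
    ufnRound f s (Fin.last k) = s 0 + f (fun j => s j.succ) := dif_neg (by simp)

lemma ufnRound_injective {n k : ℕ} (f : SrcRF n k) : Function.Injective (ufnRound f) := by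
  intro s s' h
  have h1 : ∀ jj : Fin k, s jj.succ = s' jj.succ := by
    intro jj
    have key := congrFun h jj.castSucc
    rw [ufnRound_apply_lt f s _ (by simpa using jj.isLt),
      ufnRound_apply_lt f s' _ (by simpa using jj.isLt)] at key
    have hjj : (⟨((jj.castSucc : Fin (k + 1)) : ℕ) + 1, by
        have h := jj.isLt; simp only [Fin.coe_castSucc]; omega⟩ : Fin (k + 1)) = jj.succ := by
      apply Fin.ext
      simp
    rwa [hjj] at key
  have hfun : (fun t : Fin k => s t.succ) = fun t => s' t.succ := funext h1
  have h0 : s 0 = s' 0 := by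
    have key := congrFun h (Fin.last k)
    rw [ufnRound_apply_last, ufnRound_apply_last, hfun] at key
    exact add_right_cancel key
  funext j
  by_cases hj : j = 0
  · rw [hj]; exact h0
  · have hvne : (j : ℕ) ≠ 0 := by intro h; exact hj (Fin.ext (by rw [h, Fin.val_zero]))
    have hjlt := j.isLt
    have hjs : j = (⟨(j : ℕ) - 1, by omega⟩ : Fin k).succ := by
      apply Fin.ext
      show (j : ℕ) = ((j : ℕ) - 1) + 1
      omega
    rw [hjs]
    exact h1 _

lemma ufnRun_injective {n k : ℕ} (r : ℕ) (f : Fin r → SrcRF n k) :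
    Function.Injective (ufnRun r f) := by
  induction r with
  | zero => exact fun a b h => h
  | succ r ih => exact fun a b h => ih _ (ufnRound_injective _ h)

/-- The state after the first `i'` of `i' + 1` rounds. -/
def sFaux (n k i' : ℕ) (hik : i' + 1 ≤ k + 2) (F : Fin (k + 2) → SrcRF n k) (s : St n k) :
    St n k :=
  ufnRun i' (fun t => F (Fin.castLE hik t.castSucc)) s

lemma ufnRun_succ_eq (n k i' : ℕ) (hik : i' + 1 ≤ k + 2) (F : Fin (k + 2) → SrcRF n k)
    (s : St n k) :
    ufnRun (i' + 1) (fun t => F (Fin.castLE hik t)) s =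
      ufnRound (F (Fin.castLE hik (Fin.last i'))) (sFaux n k i' hik F s) := rfl

lemma sFaux_congr (n k i' : ℕ) (hik : i' + 1 ≤ k + 2) (F₁ F₂ : Fin (k + 2) → SrcRF n k)
    (hFF : ∀ j : Fin (k + 2), (j : ℕ) < i' → F₁ j = F₂ j) (s : St n k) :
    sFaux n k i' hik F₁ s = sFaux n k i' hik F₂ s := by
  unfold sFaux
  have hfe : (fun t : Fin i' => F₁ (Fin.castLE hik t.castSucc)) =
      (fun t : Fin i' => F₂ (Fin.castLE hik t.castSucc)) := by
    funext t
    exact hFF _ (by simpa using t.isLt)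
  rw [hfe]

/-- Core counting bound: for a fixed round `i ≥ 1` and fixed distinct queries `p ≠ q`, the
set of tuples of round functions making the source parts collide after `i` rounds has density
at most `2 ^ (-n)`. -/
lemma ufn_core {n k m : ℕ} (hk : 1 ≤ k) (i : ℕ) (hi1 : 1 ≤ i) (hik : i ≤ k + 2)
    (x : Fin m → St n k) (hx : Function.Injective x) (p q : Fin m) (hpq : p ≠ q)
    (E : Finset (Fin (k + 2) → SrcRF n k))
    (hE : ∀ F ∈ E, ∀ j : Fin (k + 1), j ≠ 0 →
        ufnRun i (fun t => F (Fin.castLE hik t)) (x p) j =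
        ufnRun i (fun t => F (Fin.castLE hik t)) (x q) j) :
    E.card * 2 ^ n ≤ Fintype.card (Fin (k + 2) → SrcRF n k) := by
  classical
  obtain ⟨i', rfl⟩ : ∃ i', i = i' + 1 := ⟨i - 1, by omega⟩
  have hA : ∀ F ∈ E,
      (fun j : Fin k => sFaux n k i' hik F (x p) j.succ) ≠
        (fun j : Fin k => sFaux n k i' hik F (x q) j.succ) ∧
      F (Fin.castLE hik (Fin.last i')) (fun j : Fin k => sFaux n k i' hik F (x p) j.succ) =
        (sFaux n k i' hik F (x q) 0 - sFaux n k i' hik F (x p) 0) +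
          F (Fin.castLE hik (Fin.last i')) (fun j : Fin k => sFaux n k i' hik F (x q) j.succ) := by
    intro F hF
    have hlast := hE F hF (Fin.last k) (by
      simp only [ne_eq, Fin.ext_iff, Fin.val_last, Fin.val_zero]
      omega)
    rw [ufnRun_succ_eq, ufnRun_succ_eq, ufnRound_apply_last, ufnRound_apply_last] at hlast
    constructor
    · intro hu
      have h0 : sFaux n k i' hik F (x p) 0 = sFaux n k i' hik F (x q) 0 := by
        rw [hu] at hlast
        exact add_right_cancel hlast
      have hs : sFaux n k i' hik F (x p) = sFaux n k i' hik F (x q) := by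
        funext j
        by_cases hj : j = 0
        · rw [hj]; exact h0
        · have hvne : (j : ℕ) ≠ 0 := by intro h; exact hj (Fin.ext (by rw [h, Fin.val_zero]))
          have hjlt := j.isLt
          have hjs : j = (⟨(j : ℕ) - 1, by omega⟩ : Fin k).succ := by
            apply Fin.ext
            show (j : ℕ) = ((j : ℕ) - 1) + 1
            omega
          rw [hjs]
          exact congrFun hu _
      exact hpq (hx (ufnRun_injective _ _ hs))
    · have h2 : F (Fin.castLE hik (Fin.last i'))
          (fun j : Fin k => sFaux n k i' hik F (x p) j.succ)
          = (sFaux n k i' hik F (x q) 0 +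
              F (Fin.castLE hik (Fin.last i'))
                (fun j : Fin k => sFaux n k i' hik F (x q) j.succ))
            - sFaux n k i' hik F (x p) 0 := by
        rw [← hlast]
        abel
      rw [h2]
      abel
  have hmain : (E ×ˢ (Finset.univ : Finset (Blk n))).card ≤
      (Finset.univ : Finset (Fin (k + 2) → SrcRF n k)).card := by
    apply Finset.card_le_card_of_injOn (fun Fb =>
      Function.update Fb.1 (Fin.castLE hik (Fin.last i'))
        (Function.update (Fb.1 (Fin.castLE hik (Fin.last i')))
          (fun j : Fin k => sFaux n k i' hik Fb.1 (x p) j.succ)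
          (Fb.1 (Fin.castLE hik (Fin.last i'))
            (fun j : Fin k => sFaux n k i' hik Fb.1 (x p) j.succ) + Fb.2)))
      (fun _ _ => Finset.mem_univ _)
    rintro ⟨F₁, b₁⟩ h₁ ⟨F₂, b₂⟩ h₂ hEq
    simp only [Finset.coe_product, Set.mem_prod, Finset.mem_coe, Finset.mem_univ,
      and_true] at h₁ h₂
    obtain ⟨hu₁, hc₁⟩ := hA F₁ h₁
    obtain ⟨hu₂, hc₂⟩ := hA F₂ h₂
    dsimp only at hEq
    have hoff : ∀ j : Fin (k + 2), j ≠ Fin.castLE hik (Fin.last i') → F₁ j = F₂ j := by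
      intro j hj
      have hj' := congrFun hEq j
      rwa [Function.update_of_ne hj, Function.update_of_ne hj] at hj'
    have hs : ∀ s, sFaux n k i' hik F₁ s = sFaux n k i' hik F₂ s := by
      intro s
      apply sFaux_congr
      intro j hjv
      apply hoff
      intro hcon
      rw [hcon] at hjv
      simp at hjv
    simp only [← hs] at hEq hu₂ hc₂
    have hVne : (fun j : Fin k => sFaux n k i' hik F₁ (x q) j.succ) ≠
        (fun j : Fin k => sFaux n k i' hik F₁ (x p) j.succ) := Ne.symm hu₁
    have hj₀ := congrFun hEq (Fin.castLE hik (Fin.last i'))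
    rw [Function.update_self, Function.update_self] at hj₀
    have hV := congrFun hj₀ (fun j : Fin k => sFaux n k i' hik F₁ (x q) j.succ)
    rw [Function.update_of_ne hVne, Function.update_of_ne hVne] at hV
    have hU := congrFun hj₀ (fun j : Fin k => sFaux n k i' hik F₁ (x p) j.succ)
    rw [Function.update_self, Function.update_self] at hU
    have hFU : F₁ (Fin.castLE hik (Fin.last i'))
        (fun j : Fin k => sFaux n k i' hik F₁ (x p) j.succ)
        = F₂ (Fin.castLE hik (Fin.last i'))
          (fun j : Fin k => sFaux n k i' hik F₁ (x p) j.succ) := by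
      rw [hc₁, hc₂, hV]
    have hb : b₁ = b₂ := by
      rw [hFU] at hU
      exact add_left_cancel hU
    have hF0 : F₁ (Fin.castLE hik (Fin.last i')) = F₂ (Fin.castLE hik (Fin.last i')) := by
      funext v
      by_cases hv : v = (fun j : Fin k => sFaux n k i' hik F₁ (x p) j.succ)
      · rw [hv]; exact hFU
      · have hvv := congrFun hj₀ v
        rwa [Function.update_of_ne hv, Function.update_of_ne hv] at hvv
    have hF : F₁ = F₂ := by
      funext j
      by_cases hj : j = Fin.castLE hik (Fin.last i')
      · rw [hj]; exact hF0
      · exact hoff j hj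
    rw [hF, hb]
  calc E.card * 2 ^ n
      = (E ×ˢ (Finset.univ : Finset (Blk n))).card := by
        rw [Finset.card_product, Finset.card_univ]
        congr 1
        exact (blk_card n).symm
    _ ≤ (Finset.univ : Finset (Fin (k + 2) → SrcRF n k)).card := hmain
    _ = Fintype.card (Fin (k + 2) → SrcRF n k) := Finset.card_univ

open scoped Classical in
/-- Nat-level version of the bad-event bound. -/
lemma ufn_bad_nat (n k m : ℕ) (hk : 1 ≤ k) (hm : 1 ≤ m)
    (x : Fin m → St n k) (hx : Function.Injective x) :
    (Finset.univ.filter (fun F : Fin (k + 2) → SrcRF n k =>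
        ∃ i, ∃ _ : 1 ≤ i, ∃ h2 : i ≤ k + 1, ∃ p q : Fin m, p < q ∧
          ∀ j : Fin (k + 1), j ≠ 0 →
            ufnRun i (fun t => F (Fin.castLE (by omega) t)) (x p) j =
            ufnRun i (fun t => F (Fin.castLE (by omega) t)) (x q) j)).card * 2 ^ (n + 1) ≤
      (k + 1) * m ^ 2 * Fintype.card (Fin (k + 2) → SrcRF n k) := by
  classical
  set N := Fintype.card (Fin (k + 2) → SrcRF n k) with hN
  set S := (Finset.univ.filter (fun F : Fin (k + 2) → SrcRF n k =>
        ∃ i, ∃ _ : 1 ≤ i, ∃ h2 : i ≤ k + 1, ∃ p q : Fin m, p < q ∧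
          ∀ j : Fin (k + 1), j ≠ 0 →
            ufnRun i (fun t => F (Fin.castLE (by omega) t)) (x p) j =
            ufnRun i (fun t => F (Fin.castLE (by omega) t)) (x q) j)) with hS
  set E : Fin (k + 2) × Fin m × Fin m → Finset (Fin (k + 2) → SrcRF n k) := fun z =>
    Finset.univ.filter (fun F => ∀ j : Fin (k + 1), j ≠ 0 →
      ufnRun z.1.val (fun t => F (Fin.castLE z.1.isLt.le t)) (x z.2.1) j =
      ufnRun z.1.val (fun t => F (Fin.castLE z.1.isLt.le t)) (x z.2.2) j) with hEdef
  set I : Finset (Fin (k + 2) × Fin m × Fin m) :=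
    Finset.univ.filter (fun z => 1 ≤ z.1.val ∧ z.2.1 < z.2.2) with hIdef
  have hsub : S ⊆ I.biUnion E := by
    intro F hF
    rw [hS, Finset.mem_filter] at hF
    obtain ⟨-, i, h1, h2, pp, qq, hpq, hall⟩ := hF
    refine Finset.mem_biUnion.mpr ⟨(⟨i, by omega⟩, pp, qq), ?_, ?_⟩
    · simp only [hIdef, Finset.mem_filter, Finset.mem_univ, true_and]
      exact ⟨h1, hpq⟩
    · simp only [hEdef, Finset.mem_filter, Finset.mem_univ, true_and]
      exact hall
  have hcore : ∀ z ∈ I, (E z).card * 2 ^ n ≤ N := by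
    intro z hz
    simp only [hIdef, Finset.mem_filter, Finset.mem_univ, true_and] at hz
    refine ufn_core hk z.1.val hz.1 z.1.isLt.le x hx z.2.1 z.2.2 (ne_of_lt hz.2) (E z) ?_
    intro F hF
    simp only [hEdef, Finset.mem_filter, Finset.mem_univ, true_and] at hF
    exact hF
  have hstep : (I.biUnion E).card * 2 ^ n ≤ I.card * N := by
    calc (I.biUnion E).card * 2 ^ n ≤ (∑ z ∈ I, (E z).card) * 2 ^ n :=
          Nat.mul_le_mul_right _ Finset.card_biUnion_le
      _ = ∑ z ∈ I, (E z).card * 2 ^ n := by rw [Finset.sum_mul]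
      _ ≤ ∑ _z ∈ I, N := Finset.sum_le_sum hcore
      _ = I.card * N := by rw [Finset.sum_const, smul_eq_mul]
  have hP : 2 * (Finset.univ.filter (fun z : Fin m × Fin m => z.1 < z.2)).card ≤ m ^ 2 := by
    set B := Finset.univ.filter (fun z : Fin m × Fin m => z.1 < z.2) with hB
    set B' := Finset.univ.filter (fun z : Fin m × Fin m => z.2 < z.1) with hB'
    have h1 : B.card ≤ B'.card := by
      apply Finset.card_le_card_of_injOn Prod.swap
      · intro z hz
        simp only [hB, Finset.mem_filter, Finset.mem_univ, true_and] at hz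
        simp only [hB', Finset.mem_filter, Finset.mem_univ, true_and]
        simpa using hz
      · exact fun a _ b _ h => Prod.swap_injective h
    have h2 : B'.card ≤ B.card := by
      apply Finset.card_le_card_of_injOn Prod.swap
      · intro z hz
        simp only [hB', Finset.mem_filter, Finset.mem_univ, true_and] at hz
        simp only [hB, Finset.mem_filter, Finset.mem_univ, true_and]
        simpa using hz
      · exact fun a _ b _ h => Prod.swap_injective h
    have hdisj : Disjoint B B' := by
      rw [Finset.disjoint_left]
      intro z hz hz'
      simp only [hB, Finset.mem_filter, Finset.mem_univ, true_and] at hz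
      simp only [hB', Finset.mem_filter, Finset.mem_univ, true_and] at hz'
      exact absurd hz' (lt_asymm hz)
    have hcard : B.card + B'.card ≤ m ^ 2 := by
      rw [← Finset.card_union_of_disjoint hdisj]
      calc (B ∪ B').card ≤ (Finset.univ : Finset (Fin m × Fin m)).card :=
            Finset.card_le_card (Finset.subset_univ _)
        _ = m ^ 2 := by simp [sq]
    omega
  have hIcard : 2 * I.card ≤ (k + 1) * m ^ 2 := by
    have hsubI : I ⊆ ((Finset.univ.erase (0 : Fin (k + 2))) ×ˢ
        (Finset.univ.filter (fun z : Fin m × Fin m => z.1 < z.2))) := by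
      intro z hz
      simp only [hIdef, Finset.mem_filter, Finset.mem_univ, true_and] at hz
      rw [Finset.mem_product, Finset.mem_erase]
      refine ⟨⟨?_, Finset.mem_univ _⟩, Finset.mem_filter.mpr ⟨Finset.mem_univ _, hz.2⟩⟩
      intro hcon
      rw [hcon] at hz
      simp at hz
    have hle := Finset.card_le_card hsubI
    rw [Finset.card_product] at hle
    have he : (Finset.univ.erase (0 : Fin (k + 2))).card = k + 1 := by
      rw [Finset.card_erase_of_mem (Finset.mem_univ _), Finset.card_univ]
      simp
    rw [he] at hle
    calc 2 * I.card ≤ 2 * ((k + 1) *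
          (Finset.univ.filter (fun z : Fin m × Fin m => z.1 < z.2)).card) :=
          Nat.mul_le_mul_left _ hle
      _ = (k + 1) * (2 * (Finset.univ.filter (fun z : Fin m × Fin m => z.1 < z.2)).card) := by
          ring
      _ ≤ (k + 1) * m ^ 2 := Nat.mul_le_mul_left _ hP
  have hfinal : S.card * 2 ^ (n + 1) ≤ 2 * I.card * N := by
    have h1 : S.card ≤ (I.biUnion E).card := Finset.card_le_card hsub
    calc S.card * 2 ^ (n + 1) = S.card * 2 ^ n * 2 := by ring
      _ ≤ (I.biUnion E).card * 2 ^ n * 2 :=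
          Nat.mul_le_mul_right _ (Nat.mul_le_mul_right _ h1)
      _ ≤ I.card * N * 2 := Nat.mul_le_mul_right _ hstep
      _ = 2 * I.card * N := by ring
  exact le_trans hfinal (Nat.mul_le_mul_right _ hIcard)

open scoped Classical in
/-- **Lemma 3.2.** For `m` distinct initial states and a uniformly random tuple
of `k+2` round functions, the probability of the BAD event — some round `1 ≤ i ≤ k+1` and
queries `p < q` whose source parts `(R_{·,1}^i, …, R_{·,k}^i)` agree — is at most
`(k+1)·m² / 2^{n+1}`. -/
theorem ufn_bad_event_probability (n k m : ℕ) (hn : 1 ≤ n) (hk : 1 ≤ k) (hm : 1 ≤ m)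
    (x : Fin m → St n k) (hx : Function.Injective x) :
    ((Finset.univ.filter (fun F : Fin (k + 2) → SrcRF n k =>
        ∃ i, ∃ _ : 1 ≤ i, ∃ h2 : i ≤ k + 1, ∃ p q : Fin m, p < q ∧
          ∀ j : Fin (k + 1), j ≠ 0 →
            ufnRun i (fun t => F (Fin.castLE (by omega) t)) (x p) j =
            ufnRun i (fun t => F (Fin.castLE (by omega) t)) (x q) j)).card : ℝ) /
      (Fintype.card (Fin (k + 2) → SrcRF n k) : ℝ) ≤
      ((k : ℝ) + 1) * (m : ℝ) ^ 2 / (2 : ℝ) ^ (n + 1) := by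
  have hnat := ufn_bad_nat n k m hk hm x hx
  have hNpos : (0 : ℝ) < (Fintype.card (Fin (k + 2) → SrcRF n k) : ℝ) := by
    exact_mod_cast Fintype.card_pos
  rw [div_le_div_iff₀ hNpos (by positivity)]
  have hcast : ((k : ℝ) + 1) * (m : ℝ) ^ 2 * (Fintype.card (Fin (k + 2) → SrcRF n k) : ℝ)
      = (((k + 1) * m ^ 2 * Fintype.card (Fin (k + 2) → SrcRF n k) : ℕ) : ℝ) := by
    push_cast
    ring
  rw [hcast]
  exact_mod_cast hnat
end

section
/- Let n, k ≥ 1 and let f₁, …, f_{k+1} : (Fin n → ZMod 2) → (Fin k → (Fin n → ZMod 2)) be arbitrary round functions. Let x_p and x_q be two initial states of the n:kn-UFN that agree in all blocks except the first block L₁⁰. Then (a) the last blocks agree after each of the first k−1 rounds: R_p^i = R_q^i for all 0 ≤ i ≤ k−1, and (b) the first blocks of the states after k+1 rounds satisfy L_{p,1}^{k+1} ⊕ L_{q,1}^{k+1} = L_{p,1}⁰ ⊕ L_{q,1}⁰. -/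
/-- A round function of a target-heavy `n:kn`-UFN: input `n` bits, output `kn` bits,
with `f R j` the `(j+1)`-st `n`-bit component `C_{j+1}(f(R))` of the output. -/
abbrev TgtRF (n k : ℕ) : Type := Blk n → (Fin k → Blk n)

/-- One round of the `n:kn`-UFN:
`(L₁, …, L_k, R) ↦ (R, L₁ ⊕ C₁(f R), …, L_k ⊕ C_k(f R))`.
State coordinates `0, …, k-1` are `L₁, …, L_k` and coordinate `k` is `R`. -/
def tufnRound {n k : ℕ} (f : TgtRF n k) (s : St n k) : St n k :=
  fun i =>
    if h : (i : ℕ) = 0 then s (Fin.last k)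
    else s ⟨(i : ℕ) - 1, by have := i.isLt; omega⟩ +
      f (s (Fin.last k)) ⟨(i : ℕ) - 1, by have := i.isLt; omega⟩

/-- The `r`-round `n:kn`-UFN with round functions `f 0, …, f (r-1)`, applied with `f 0` first. -/
def tufnRun {n k : ℕ} : (r : ℕ) → (Fin r → TgtRF n k) → St n k → St n k
  | 0, _, s => s
  | r + 1, f, s => tufnRound (f (Fin.last r)) (tufnRun r (fun i => f i.castSucc) s)

lemma tufn_key {n k : ℕ} (xp xq : St n k)
    (hR : ∀ j : Fin (k + 1), j ≠ 0 → xp j = xq j) :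
    ∀ i : ℕ, (hik : i ≤ k) → ∀ g : Fin i → TgtRF n k,
      (∀ j : Fin (k + 1), (j : ℕ) ≠ i → tufnRun i g xp j = tufnRun i g xq j) ∧
      tufnRun i g xp ⟨i, by omega⟩ + tufnRun i g xq ⟨i, by omega⟩ = xp 0 + xq 0 := by
  intro i
  induction i with
  | zero =>
    intro _ g
    refine ⟨fun j hj => hR j (fun h => hj (by rw [h, Fin.val_zero])), by simp [tufnRun]⟩
  | succ i ih =>
    intro hik g
    obtain ⟨h1, h2⟩ := ih (by omega) (fun t => g t.castSucc)
    set sp := tufnRun i (fun t => g t.castSucc) xp with hsp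
    set sq := tufnRun i (fun t => g t.castSucc) xq with hsq
    have hlast : sp (Fin.last k) = sq (Fin.last k) := h1 (Fin.last k) (by simp [Fin.last]; omega)
    constructor
    · intro j hj
      show tufnRound (g (Fin.last i)) sp j = tufnRound (g (Fin.last i)) sq j
      unfold tufnRound
      by_cases h0 : (j : ℕ) = 0
      · simp [h0, hlast]
      · simp only [h0, dif_neg, not_false_iff, hlast]
        rw [h1 ⟨(j : ℕ) - 1, by have := j.isLt; omega⟩ (by simp; omega)]
    · show tufnRound (g (Fin.last i)) sp ⟨i+1, by omega⟩ +
          tufnRound (g (Fin.last i)) sq ⟨i+1, by omega⟩ = xp 0 + xq 0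
      unfold tufnRound
      simp only [hlast]
      rw [dif_neg (by simp), dif_neg (by simp)]
      simp only [Nat.add_sub_cancel]
      rw [← h2, add_add_add_comm]
      have hF : ∀ a : Blk n, a + a = 0 := fun a => funext fun b => CharTwo.add_self_eq_zero (a b)
      rw [hF, add_zero]

/-- If two initial states of the `n:kn`-UFN agree in all blocks except the
first block `L₁⁰`, then (a) their last blocks agree after each of the first `k-1` rounds:
`R_p^i = R_q^i` for all `0 ≤ i ≤ k-1`; and (b) the first blocks of the states after `k+1`
rounds satisfy `L_{p,1}^{k+1} ⊕ L_{q,1}^{k+1} = L_{p,1}⁰ ⊕ L_{q,1}⁰`. -/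
theorem tufn_k_add_one_rounds_linear_relation (n k : ℕ) (hn : 1 ≤ n) (hk : 1 ≤ k)
    (f : Fin (k + 1) → TgtRF n k) (xp xq : St n k)
    (hR : ∀ j : Fin (k + 1), j ≠ 0 → xp j = xq j) :
    (∀ i : ℕ, (hik : i ≤ k - 1) →
      tufnRun i (fun t => f (Fin.castLE (by omega) t)) xp (Fin.last k) =
      tufnRun i (fun t => f (Fin.castLE (by omega) t)) xq (Fin.last k)) ∧
    tufnRun (k + 1) f xp 0 + tufnRun (k + 1) f xq 0 = xp 0 + xq 0 := by
  constructor
  · intro i hik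
    exact (tufn_key xp xq hR i (by omega) _).1 (Fin.last k) (by simp [Fin.last]; omega)
  · obtain ⟨h1, h2⟩ := tufn_key xp xq hR k le_rfl (fun t => f t.castSucc)
    show tufnRound (f (Fin.last k)) _ 0 + tufnRound (f (Fin.last k)) _ 0 = _
    unfold tufnRound
    simp only [Fin.val_zero, dif_pos]
    have : (⟨k, by omega⟩ : Fin (k+1)) = Fin.last k := rfl
    rw [this] at h2
    exact h2
end

section
/- Let n, k ≥ 1 and let x_p ≠ x_q be two distinct initial states of the n:kn-UFN. Draw a tuple (f₁, …, f_k) of round functions uniformly at random from all tuples of functions (Fin n → ZMod 2) → (Fin k → (Fin n → ZMod 2)). Then the probability that the last blocks collide after k rounds, i.e. R_p^k = R_q^k, is at most ∑_{j=1}^{k} 1/2^{jn}. -/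
namespace TUFN
variable {n k : ℕ}

def run' (F : ℕ → TgtRF n k) : ℕ → St n k → St n k
  | 0, s => s
  | i+1, s => tufnRound (F i) (run' F i s)

lemma run'_congr {F G : ℕ → TgtRF n k} {s : St n k} :
    ∀ r, (∀ i < r, F i = G i) → run' F r s = run' G r s
  | 0, _ => rfl
  | r+1, h => by
      show tufnRound (F r) (run' F r s) = tufnRound (G r) (run' G r s)
      rw [run'_congr r (fun i hi => h i (by omega)), h r (by omega)]

lemma tufnRun_eq_run' :
    ∀ (r : ℕ) (G : Fin r → TgtRF n k) (F : ℕ → TgtRF n k),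
      (∀ i : Fin r, F (i : ℕ) = G i) → ∀ s : St n k, tufnRun r G s = run' F r s
  | 0, _, _, _, _ => rfl
  | r+1, G, F, h, s => by
      show tufnRound (G (Fin.last r)) (tufnRun r (fun i => G i.castSucc) s)
        = tufnRound (F r) (run' F r s)
      rw [tufnRun_eq_run' r (fun i => G i.castSucc) F
        (fun i => by simpa using h i.castSucc) s]
      have h2 := h (Fin.last r)
      simp only [Fin.val_last] at h2
      rw [h2]

lemma tufnRound_succ (f : TgtRF n k) (s : St n k) (c : Fin k) :
    tufnRound f s c.succ = s c.castSucc + f (s (Fin.last k)) c := by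
  have h1 : ((c.succ : Fin (k+1)) : ℕ) ≠ 0 := by simp
  rw [tufnRound]
  rw [dif_neg h1]
  congr 1

lemma zmod2_rearrange (a b x y : ZMod 2) : a + x = b + y ↔ x + y = a + b := by revert a b x y; decide

lemma blk_rearrange {n : ℕ} (a b x y : Blk n) : a + x = b + y ↔ x + y = a + b := by
  constructor
  · intro h; funext i; have h' := congrFun h i
    simp only [Pi.add_apply] at h' ⊢
    exact (zmod2_rearrange _ _ _ _).1 h'
  · intro h; funext i; have h' := congrFun h i
    simp only [Pi.add_apply] at h' ⊢
    exact (zmod2_rearrange _ _ _ _).2 h'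

lemma rotm (F : ℕ → TgtRF n k) (xp xq : St n k) :
    ∀ (t m c : ℕ) (hck : c ≤ k) (htc : t ≤ c),
      (∀ t' < t, run' F (m + t') xp (Fin.last k) = run' F (m + t') xq (Fin.last k)) →
      (run' F (m + t) xp ⟨c, by omega⟩ = run' F (m + t) xq ⟨c, by omega⟩ ↔
        run' F m xp ⟨c - t, by omega⟩ = run' F m xq ⟨c - t, by omega⟩)
  | 0, m, c, hck, htc, _ => by simp
  | t+1, m, c, hck, htc, h => by
      have hR := h t (by omega)
      have hc1 : (⟨c, by omega⟩ : Fin (k+1)) = (⟨c - 1, by omega⟩ : Fin k).succ :=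
        Fin.ext (by simp; omega)
      have e1 : run' F (m + (t+1)) xp = tufnRound (F (m+t)) (run' F (m+t) xp) := by
        rw [show m + (t+1) = (m+t)+1 by omega]; rfl
      have e2 : run' F (m + (t+1)) xq = tufnRound (F (m+t)) (run' F (m+t) xq) := by
        rw [show m + (t+1) = (m+t)+1 by omega]; rfl
      rw [e1, e2, hc1, tufnRound_succ, tufnRound_succ, hR, add_left_inj]
      have hcs : ((⟨c - 1, by omega⟩ : Fin k).castSucc) = (⟨c - 1, by omega⟩ : Fin (k+1)) :=
        Fin.ext (by simp)
      rw [hcs]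
      have := rotm F xp xq t m (c-1) (by omega) (by omega) (fun t' ht' => h t' (by omega))
      rw [this]
      constructor <;> intro h' <;> [skip; skip] <;>
        (convert h' using 2 <;> exact Fin.ext (by simp; omega))

lemma chain2 (F : ℕ → TgtRF n k) (xp xq : St n k) (m : ℕ) :
    ∀ t, t ≤ k →
    ((∀ t', 1 ≤ t' → t' ≤ t →
        run' F (m + t') xp (Fin.last k) = run' F (m + t') xq (Fin.last k)) ↔
      (∀ (c : ℕ) (hc : c < k), k - t ≤ c →
        F m (run' F m xp (Fin.last k)) ⟨c, hc⟩ + F m (run' F m xq (Fin.last k)) ⟨c, hc⟩ =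
          run' F m xp ⟨c, by omega⟩ + run' F m xq ⟨c, by omega⟩))
  | 0, _ => by
      constructor
      · intro _ c hc hc'; omega
      · intro _ t' h1 h2; omega
  | t+1, ht => by
      have IH := chain2 F xp xq m t (by omega)
      -- the new single condition
      have key : (∀ t', 1 ≤ t' → t' ≤ t →
          run' F (m + t') xp (Fin.last k) = run' F (m + t') xq (Fin.last k)) →
          ((run' F (m + (t+1)) xp (Fin.last k) = run' F (m + (t+1)) xq (Fin.last k)) ↔
            (F m (run' F m xp (Fin.last k)) ⟨k - t - 1, by omega⟩ +
              F m (run' F m xq (Fin.last k)) ⟨k - t - 1, by omega⟩ =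
              run' F m xp ⟨k - t - 1, by omega⟩ + run' F m xq ⟨k - t - 1, by omega⟩)) := by
        intro hL
        have hrot := rotm F xp xq t (m+1) k (le_refl k) (by omega)
          (fun t' ht' => by
            have := hL (t'+1) (by omega) (by omega)
            rw [show m + 1 + t' = m + (t'+1) by omega]; exact this)
        have hlast : (Fin.last k) = (⟨k, by omega⟩ : Fin (k+1)) := rfl
        rw [show m + (t+1) = m + 1 + t by omega, hlast, hrot]
        have e1 : run' F (m + 1) xp = tufnRound (F m) (run' F m xp) := rfl
        have e2 : run' F (m + 1) xq = tufnRound (F m) (run' F m xq) := rfl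
        have hidx : (⟨k - t, by omega⟩ : Fin (k+1)) = (⟨k - t - 1, by omega⟩ : Fin k).succ :=
          Fin.ext (by simp; omega)
        rw [e1, e2, hidx, tufnRound_succ, tufnRound_succ]
        have hcs : ((⟨k - t - 1, by omega⟩ : Fin k).castSucc)
            = (⟨k - t - 1, by omega⟩ : Fin (k+1)) := Fin.ext (by simp)
        rw [hcs]
        exact blk_rearrange _ _ _ _
      constructor
      · intro hL c hc hc'
        rcases Nat.lt_or_ge c (k - t) with h1 | h1
        · have hc2 : c = k - t - 1 := by omega
          subst hc2
          exact (key (fun t' a b => hL t' a (by omega))).1 (hL (t+1) (by omega) (by omega))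
        · exact IH.1 (fun t' a b => hL t' a (by omega)) c hc h1
      · intro hR t' h1 h2
        have hLt : ∀ t'', 1 ≤ t'' → t'' ≤ t →
            run' F (m + t'') xp (Fin.last k) = run' F (m + t'') xq (Fin.last k) :=
          IH.2 (fun c hc hc' => hR c hc (by omega))
        rcases Nat.lt_or_ge t' (t+1) with h3 | h3
        · exact hLt t' h1 (by omega)
        · have ht' : t' = t + 1 := by omega
          subst ht'
          exact (key hLt).2 (hR (k - t - 1) (by omega) (by omega))

def Fe {n k : ℕ} (F : Fin k → TgtRF n k) : ℕ → TgtRF n k :=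
  fun i => if h : i < k then F ⟨i, h⟩ else fun _ _ _ => 0

lemma Fe_lt {n k : ℕ} (F : Fin k → TgtRF n k) {i : ℕ} (h : i < k) :
    Fe F i = F ⟨i, h⟩ := dif_pos h

lemma tufnRun_eq_run'_Fe {n k : ℕ} (F : Fin k → TgtRF n k) (s : St n k) :
    tufnRun k F s = run' (Fe F) k s :=
  tufnRun_eq_run' k F (Fe F) (fun i => by rw [Fe_lt F i.isLt]) s

lemma run'_Fe_congr {n k : ℕ} {F G : Fin k → TgtRF n k} {m : ℕ} (hm : m ≤ k)
    (h : ∀ i : Fin k, (i : ℕ) < m → F i = G i) (s : St n k) :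
    run' (Fe F) m s = run' (Fe G) m s := by
  refine run'_congr m (fun i hi => ?_)
  have hik : i < k := by omega
  rw [Fe_lt F hik, Fe_lt G hik]
  exact h ⟨i, hik⟩ hi

lemma blk_solve {n : ℕ} (x y s : Blk n) (h : x + y = s) : x = y + s := by
  funext i
  have h' := congrFun h i
  simp only [Pi.add_apply] at h' ⊢
  revert h'
  generalize x i = a; generalize y i = b; generalize s i = c
  revert a b c; decide

open scoped Classical in
lemma count_bad (n k : ℕ) (xp xq : St n k) (m : ℕ) (hm : m < k) :
    (Finset.univ.filter (fun F : Fin k → TgtRF n k =>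
      run' (Fe F) m xp (Fin.last k) ≠ run' (Fe F) m xq (Fin.last k) ∧
      ∀ (c : ℕ) (hc : c < k), m ≤ c →
        Fe F m (run' (Fe F) m xp (Fin.last k)) ⟨c, hc⟩ +
          Fe F m (run' (Fe F) m xq (Fin.last k)) ⟨c, hc⟩ =
          run' (Fe F) m xp ⟨c, by omega⟩ +
            run' (Fe F) m xq ⟨c, by omega⟩)).card * 2 ^ ((k - m) * n)
      ≤ Fintype.card (Fin k → TgtRF n k) := by
  have hkm : 0 < k - m := by omega
  set pad : Fin k → Fin (k - m) := fun c => ⟨((c : ℕ) - m) % (k - m), Nat.mod_lt _ hkm⟩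
    with hpad
  set B := Finset.univ.filter (fun F : Fin k → TgtRF n k =>
      run' (Fe F) m xp (Fin.last k) ≠ run' (Fe F) m xq (Fin.last k) ∧
      ∀ (c : ℕ) (hc : c < k), m ≤ c →
        Fe F m (run' (Fe F) m xp (Fin.last k)) ⟨c, hc⟩ +
          Fe F m (run' (Fe F) m xq (Fin.last k)) ⟨c, hc⟩ =
          run' (Fe F) m xp ⟨c, by omega⟩ +
            run' (Fe F) m xq ⟨c, by omega⟩) with hB
  set Φ : (Fin k → TgtRF n k) × (Fin (k - m) → Blk n) → (Fin k → TgtRF n k) :=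
    fun p => Function.update p.1 ⟨m, hm⟩ (fun x c =>
      if x = run' (Fe p.1) m xp (Fin.last k) ∧ m ≤ (c : ℕ) then p.2 (pad c)
      else p.1 ⟨m, hm⟩ x c) with hΦ
  have hinj : Set.InjOn Φ ((B ×ˢ (Finset.univ : Finset (Fin (k - m) → Blk n))) :
      Finset ((Fin k → TgtRF n k) × (Fin (k - m) → Blk n))) := by
    rintro ⟨F, v⟩ h1 ⟨F', v'⟩ h2 heq
    rw [Finset.mem_coe, Finset.mem_product, hB, Finset.mem_filter] at h1 h2
    obtain ⟨⟨-, hab, hcon⟩, -⟩ := h1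
    obtain ⟨⟨-, hab', hcon'⟩, -⟩ := h2
    have hoff : ∀ i : Fin k, i ≠ ⟨m, hm⟩ → F i = F' i := by
      intro i hi
      have h3 := congrFun heq i
      simp only [hΦ] at h3
      rwa [Function.update_of_ne hi, Function.update_of_ne hi] at h3
    have hpre : ∀ s : St n k, run' (Fe F) m s = run' (Fe F') m s := by
      intro s
      refine run'_Fe_congr (le_of_lt hm) (fun i hi => hoff i ?_) s
      intro hcontra
      have : (i : ℕ) = m := by rw [hcontra]
      omega
    have ha' : run' (Fe F') m xp (Fin.last k) = run' (Fe F) m xp (Fin.last k) :=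
      congrFun (hpre xp).symm _
    have hb' : run' (Fe F') m xq (Fin.last k) = run' (Fe F) m xq (Fin.last k) :=
      congrFun (hpre xq).symm _
    have hgm : ∀ (x : Blk n) (c : Fin k),
        (if x = run' (Fe F) m xp (Fin.last k) ∧ m ≤ (c : ℕ) then v (pad c)
          else F ⟨m, hm⟩ x c) =
        (if x = run' (Fe F) m xp (Fin.last k) ∧ m ≤ (c : ℕ) then v' (pad c)
          else F' ⟨m, hm⟩ x c) := by
      intro x c
      have h3 := congrFun (congrFun (congrFun heq ⟨m, hm⟩) x) c
      simp only [hΦ, Function.update_self] at h3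
      rwa [ha'] at h3
    have hoffa : ∀ x : Blk n, x ≠ run' (Fe F) m xp (Fin.last k) →
        F ⟨m, hm⟩ x = F' ⟨m, hm⟩ x := by
      intro x hx
      funext c
      have h3 := hgm x c
      rwa [if_neg (by tauto), if_neg (by tauto)] at h3
    have hv : v = v' := by
      funext d
      have hdk : m + (d : ℕ) < k := by omega
      have h3 := hgm (run' (Fe F) m xp (Fin.last k)) ⟨m + (d : ℕ), hdk⟩
      rw [if_pos ⟨rfl, by simp⟩, if_pos ⟨rfl, by simp⟩] at h3
      have hd : pad ⟨m + (d : ℕ), hdk⟩ = d := by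
        apply Fin.ext
        simp only [hpad]
        have : m + (d : ℕ) - m = (d : ℕ) := by omega
        rw [this, Nat.mod_eq_of_lt d.isLt]
      rwa [hd] at h3
    have hFm : F ⟨m, hm⟩ = F' ⟨m, hm⟩ := by
      funext x c
      by_cases hx : x = run' (Fe F) m xp (Fin.last k)
      · subst hx
        by_cases hc : m ≤ (c : ℕ)
        · have e1 := hcon (c : ℕ) c.isLt hc
          have e2 := hcon' (c : ℕ) c.isLt hc
          rw [Fe_lt F hm] at e1
          rw [Fe_lt F' hm, ha', hb', ← hpre xp, ← hpre xq] at e2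
          simp only [Fin.eta] at e1 e2
          have s1 := blk_solve _ _ _ e1
          have s2 := blk_solve _ _ _ e2
          have hbne : run' (Fe F) m xq (Fin.last k) ≠ run' (Fe F) m xp (Fin.last k) :=
            fun h => hab h.symm
          rw [s1, s2, hoffa _ hbne]
        · have h3 := hgm (run' (Fe F) m xp (Fin.last k)) c
          rwa [if_neg (by tauto), if_neg (by tauto)] at h3
      · exact congrFun (hoffa x hx) c
    have hFF : F = F' := by
      funext i
      by_cases hi : i = ⟨m, hm⟩
      · rw [hi]; exact hFm
      · exact hoff i hi
    simp [hFF, hv]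
  have hcard := Finset.card_le_card_of_injOn Φ
    (fun p _ => Finset.mem_univ (Φ p)) hinj
  rw [Finset.card_product, Finset.card_univ, Finset.card_univ] at hcard
  have hV : Fintype.card (Fin (k - m) → Blk n) = 2 ^ ((k - m) * n) := by
    rw [Fintype.card_fun]
    have hblk : Fintype.card (Blk n) = 2 ^ n := by
      rw [Fintype.card_fun]
      simp [ZMod]
    rw [hblk, Fintype.card_fin, ← pow_mul, mul_comm n]
  rw [hV] at hcard
  exact hcard

open scoped Classical in
lemma event_subset (n k : ℕ) (hk : 1 ≤ k) (xp xq : St n k) (hne : xp ≠ xq) :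
    Finset.univ.filter (fun F : Fin k → TgtRF n k =>
        run' (Fe F) k xp (Fin.last k) = run' (Fe F) k xq (Fin.last k)) ⊆
      (Finset.range k).biUnion (fun m => Finset.univ.filter
        (fun F : Fin k → TgtRF n k =>
          run' (Fe F) m xp (Fin.last k) ≠ run' (Fe F) m xq (Fin.last k) ∧
          ∀ (c : ℕ) (hc : c < k), m ≤ c →
            Fe F m (run' (Fe F) m xp (Fin.last k)) ⟨c, hc⟩ +
              Fe F m (run' (Fe F) m xq (Fin.last k)) ⟨c, hc⟩ =
              run' (Fe F) m xp ⟨c, by omega⟩ +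
                run' (Fe F) m xq ⟨c, by omega⟩)) := by
  intro F hF
  rw [Finset.mem_filter] at hF
  obtain ⟨-, hE⟩ := hF
  by_cases hall : ∀ i < k, run' (Fe F) i xp (Fin.last k) = run' (Fe F) i xq (Fin.last k)
  · exfalso
    apply hne
    funext c
    have hck : (c : ℕ) ≤ k := by omega
    have h := rotm (Fe F) xp xq (k - (c : ℕ)) 0 k le_rfl (by omega)
      (fun t' ht' => by rw [Nat.zero_add]; exact hall t' (by omega))
    rw [Nat.zero_add] at h
    have hLHS : run' (Fe F) (k - (c : ℕ)) xp ⟨k, by omega⟩ =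
        run' (Fe F) (k - (c : ℕ)) xq ⟨k, by omega⟩ := by
      rcases Nat.lt_or_ge (k - (c : ℕ)) k with h1 | h1
      · exact hall _ h1
      · have : k - (c : ℕ) = k := by omega
        rw [this]
        exact hE
    have h2 := h.1 hLHS
    have hidx : (⟨k - (k - (c : ℕ)), by omega⟩ : Fin (k+1)) = c :=
      Fin.ext (by simp; omega)
    rwa [hidx] at h2
  · push_neg at hall
    obtain ⟨i0, hi0k, hi0⟩ := hall
    set s := (Finset.range k).filter
      (fun i => run' (Fe F) i xp (Fin.last k) ≠ run' (Fe F) i xq (Fin.last k)) with hs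
    have hsne : s.Nonempty := ⟨i0, by rw [hs, Finset.mem_filter, Finset.mem_range]; exact ⟨hi0k, hi0⟩⟩
    set m := s.max' hsne with hmdef
    have hms : m ∈ s := s.max'_mem hsne
    rw [hs, Finset.mem_filter, Finset.mem_range] at hms
    obtain ⟨hmk, hmne⟩ := hms
    have hmax : ∀ i, m < i → i < k →
        run' (Fe F) i xp (Fin.last k) = run' (Fe F) i xq (Fin.last k) := by
      intro i hmi hik
      by_contra hcon
      have : i ∈ s := by rw [hs, Finset.mem_filter, Finset.mem_range]; exact ⟨hik, hcon⟩
      have := s.le_max' i this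
      omega
    have hL : ∀ t', 1 ≤ t' → t' ≤ k - m →
        run' (Fe F) (m + t') xp (Fin.last k) = run' (Fe F) (m + t') xq (Fin.last k) := by
      intro t' h1 h2
      rcases Nat.lt_or_ge (m + t') k with h3 | h3
      · exact hmax (m + t') (by omega) h3
      · have : m + t' = k := by omega
        rw [this]; exact hE
    have hcons := (chain2 (Fe F) xp xq m (k - m) (by omega)).1 hL
    rw [Finset.mem_biUnion]
    refine ⟨m, Finset.mem_range.2 hmk, ?_⟩
    rw [Finset.mem_filter]
    refine ⟨Finset.mem_univ _, hmne, fun c hc hcm => ?_⟩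
    exact hcons c hc (by omega)

end TUFN

open scoped Classical in
/-- **per-pair collision estimate from the proof of Lemma 3.4.** For two distinct
initial states of the `n:kn`-UFN and a uniformly random tuple of `k` round functions, the
probability that the last blocks collide after `k` rounds, `R_p^k = R_q^k`, is at most
`∑_{j=1}^{k} 1/2^{jn}`. -/
theorem tufn_last_block_collision_probability (n k : ℕ) (hn : 1 ≤ n) (hk : 1 ≤ k)
    (xp xq : St n k) (hne : xp ≠ xq) :
    ((Finset.univ.filter (fun F : Fin k → TgtRF n k =>
        tufnRun k F xp (Fin.last k) = tufnRun k F xq (Fin.last k))).card : ℝ) /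
      (Fintype.card (Fin k → TgtRF n k) : ℝ) ≤
      ∑ j ∈ Finset.Icc 1 k, (1 : ℝ) / (2 : ℝ) ^ (j * n) := by
  have hT0 : (0 : ℝ) < (Fintype.card (Fin k → TgtRF n k) : ℝ) := by
    exact_mod_cast Fintype.card_pos
  have hfe : Finset.univ.filter (fun F : Fin k → TgtRF n k =>
      tufnRun k F xp (Fin.last k) = tufnRun k F xq (Fin.last k)) =
      Finset.univ.filter (fun F : Fin k → TgtRF n k =>
        TUFN.run' (TUFN.Fe F) k xp (Fin.last k) = TUFN.run' (TUFN.Fe F) k xq (Fin.last k)) := by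
    apply Finset.filter_congr
    intro F _
    rw [TUFN.tufnRun_eq_run'_Fe, TUFN.tufnRun_eq_run'_Fe]
  rw [hfe]
  have hsub := TUFN.event_subset n k hk xp xq hne
  set Bad := fun m => Finset.univ.filter
        (fun F : Fin k → TgtRF n k =>
          TUFN.run' (TUFN.Fe F) m xp (Fin.last k) ≠ TUFN.run' (TUFN.Fe F) m xq (Fin.last k) ∧
          ∀ (c : ℕ) (hc : c < k), m ≤ c →
            TUFN.Fe F m (TUFN.run' (TUFN.Fe F) m xp (Fin.last k)) ⟨c, hc⟩ +
              TUFN.Fe F m (TUFN.run' (TUFN.Fe F) m xq (Fin.last k)) ⟨c, hc⟩ =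
              TUFN.run' (TUFN.Fe F) m xp ⟨c, by omega⟩ +
                TUFN.run' (TUFN.Fe F) m xq ⟨c, by omega⟩) with hBad
  have hcard1 : (Finset.univ.filter (fun F : Fin k → TgtRF n k =>
      TUFN.run' (TUFN.Fe F) k xp (Fin.last k) = TUFN.run' (TUFN.Fe F) k xq (Fin.last k))).card
      ≤ ∑ m ∈ Finset.range k, (Bad m).card :=
    le_trans (Finset.card_le_card hsub) (Finset.card_biUnion_le)
  have step1 : ((Finset.univ.filter (fun F : Fin k → TgtRF n k =>
      TUFN.run' (TUFN.Fe F) k xp (Fin.last k) = TUFN.run' (TUFN.Fe F) k xq (Fin.last k))).card : ℝ) /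
      (Fintype.card (Fin k → TgtRF n k) : ℝ) ≤
      ∑ m ∈ Finset.range k, ((Bad m).card : ℝ) / (Fintype.card (Fin k → TgtRF n k) : ℝ) := by
    rw [← Finset.sum_div]
    gcongr
    exact_mod_cast hcard1
  refine step1.trans ?_
  have step2 : ∀ m ∈ Finset.range k,
      ((Bad m).card : ℝ) / (Fintype.card (Fin k → TgtRF n k) : ℝ) ≤
        (1 : ℝ) / (2 : ℝ) ^ ((k - m) * n) := by
    intro m hm
    rw [Finset.mem_range] at hm
    have hc := TUFN.count_bad n k xp xq m hm
    rw [div_le_div_iff₀ hT0 (by positivity)]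
    have : ((Bad m).card : ℝ) * (2 : ℝ) ^ ((k - m) * n) ≤
        (Fintype.card (Fin k → TgtRF n k) : ℝ) := by
      exact_mod_cast hc
    linarith
  refine (Finset.sum_le_sum step2).trans ?_
  apply le_of_eq
  refine Finset.sum_nbij' (fun m => k - m) (fun j => k - j) ?_ ?_ ?_ ?_ ?_
  · intro m hm; rw [Finset.mem_range] at hm; simp only [Finset.mem_Icc]; omega
  · intro j hj; rw [Finset.mem_Icc] at hj; simp only [Finset.mem_range]; omega
  · intro m hm; rw [Finset.mem_range] at hm; show k - (k - m) = m; omega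
  · intro j hj; rw [Finset.mem_Icc] at hj; show k - (k - j) = j; omega
  · intro m _; rfl
end

section
/- Let n, k, m ≥ 1 and let x₁, …, x_m be m distinct initial states of the n:kn-UFN. Draw a tuple (f₁, …, f_{k+2}) of round functions uniformly at random from all tuples of functions (Fin n → ZMod 2) → (Fin k → (Fin n → ZMod 2)). Let the BAD event ξ be: there exist a round index i ∈ {k, k+1} and query indices p < q such that the last blocks collide, R_p^i = R_q^i, where R_p^i is the last block of the state of query x_p after i rounds. Then Pr[ξ] ≤ m² / 2^n. -/
namespace UFN

variable {n k : ℕ}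

/-- iterate rounds with ℕ-indexed round functions -/
def sts (F : ℕ → TgtRF n k) (x : St n k) : ℕ → St n k
  | 0 => x
  | i + 1 => tufnRound (F i) (sts F x i)

/-- last block -/
def RL (F : ℕ → TgtRF n k) (x : St n k) (s : ℕ) : Blk n := sts F x s (Fin.last k)

theorem sts_congr {F G : ℕ → TgtRF n k} {x : St n k} (r : ℕ)
    (h : ∀ j < r, F j = G j) : sts F x r = sts G x r := by
  induction r with
  | zero => rfl
  | succ r ih =>
    simp only [sts]
    rw [ih (fun j hj => h j (by omega)), h r (by omega)]

theorem tufnRun_eq_sts (r : ℕ) (f : Fin r → TgtRF n k) (x : St n k)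
    (F : ℕ → TgtRF n k) (hF : ∀ j : Fin r, F j = f j) :
    tufnRun r f x = sts F x r := by
  induction r with
  | zero => rfl
  | succ r ih =>
    show tufnRound (f (Fin.last r)) (tufnRun r (fun i => f i.castSucc) x) = _
    rw [ih (fun i => f i.castSucc) (fun j => hF j.castSucc)]
    exact congrArg (fun g => tufnRound g (sts F x r)) (hF (Fin.last r)).symm

/-- lift a tuple of k+2 round functions to a ℕ-indexed family -/
def FN (F : Fin (k + 2) → TgtRF n k) : ℕ → TgtRF n k :=
  fun j => if h : j < k + 2 then F ⟨j, h⟩ else fun _ _ => 0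

theorem run_eq_FN {i : ℕ} (hi : i ≤ k + 2) (F : Fin (k + 2) → TgtRF n k) (x : St n k) :
    tufnRun i (fun t => F (Fin.castLE hi t)) x = sts (FN F) x i := by
  refine tufnRun_eq_sts i _ x (FN F) (fun j => ?_)
  have hj : (j : ℕ) < k + 2 := lt_of_lt_of_le j.isLt hi
  simp only [FN, dif_pos hj]
  rfl

end UFN

namespace UFN

variable {n k : ℕ}

/-- modify `F` at function index `t`, input `a`, output component `c` -/
def mdf (F : ℕ → TgtRF n k) (t : ℕ) (a : Blk n) (c : Fin k) (w : Blk n) : ℕ → TgtRF n k :=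
  fun j => if j = t then (fun R d => if R = a ∧ d = c then w else F t R d) else F j

theorem mdf_ne {F : ℕ → TgtRF n k} {t : ℕ} {a : Blk n} {c : Fin k} {w : Blk n}
    {j : ℕ} (h : j ≠ t) : mdf F t a c w j = F j := by
  simp [mdf, h]

theorem mdf_ne_pt {F : ℕ → TgtRF n k} {t : ℕ} {a : Blk n} {c : Fin k} {w : Blk n}
    {R : Blk n} (h : R ≠ a) : mdf F t a c w t R = F t R := by
  funext d; simp [mdf, h]

theorem mdf_at {F : ℕ → TgtRF n k} {t : ℕ} {a : Blk n} {c : Fin k} {w : Blk n}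
    (d : Fin k) : mdf F t a c w t a d = if d = c then w else F t a d := by
  simp [mdf]

theorem tufnRound_congr {f g : TgtRF n k} (σ : St n k)
    (h : f (σ (Fin.last k)) = g (σ (Fin.last k))) : tufnRound f σ = tufnRound g σ := by
  funext i; simp only [tufnRound, h]

/-- rounds before `t` are unaffected -/
theorem sts_mdf_pre (F : ℕ → TgtRF n k) (t : ℕ) (a : Blk n) (c : Fin k) (w : Blk n)
    (y : St n k) : ∀ s, s ≤ t → sts (mdf F t a c w) y s = sts F y s := by
  intro s hs
  induction s with
  | zero => rfl
  | succ s ih =>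
    simp only [sts]
    rw [ih (by omega), mdf_ne (by omega)]

/-- a trajectory whose round-`t` input differs from `a` is entirely unaffected -/
theorem sts_mdf_of_ne (F : ℕ → TgtRF n k) (t : ℕ) (a : Blk n) (c : Fin k) (w : Blk n)
    (y : St n k) (hy : RL F y t ≠ a) : ∀ s, sts (mdf F t a c w) y s = sts F y s := by
  intro s
  induction s with
  | zero => rfl
  | succ s ih =>
    simp only [sts]
    rw [ih]
    by_cases hst : s = t
    · subst hst
      exact tufnRound_congr (sts F y s) (mdf_ne_pt hy)
    · rw [mdf_ne hst]

/-- the main structural propagation lemma -/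
theorem sts_mdf_main (F : ℕ → TgtRF n k) (t : ℕ) (a : Blk n) (c : Fin k) (w : Blk n)
    (y : St n k) (hy : RL F y t = a) :
    ∀ d, 1 ≤ d → (c : ℕ) + d ≤ k → ∀ j : Fin (k + 1),
      sts (mdf F t a c w) y (t + d) j =
        sts F y (t + d) j + (if (j : ℕ) = (c : ℕ) + d then w - F t a c else 0) := by
  intro d
  induction d with
  | zero => omega
  | succ d ih =>
    intro _ hcd j
    rw [← Nat.add_assoc]
    by_cases hd0 : d = 0
    · -- base case d+1 = 1
      subst hd0
      have hpre := sts_mdf_pre F t a c w y t le_rfl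
      have hin : sts F y t (Fin.last k) = a := hy
      have hck := c.isLt
      simp only [sts, hpre, tufnRound]
      rcases Nat.eq_zero_or_pos (j : ℕ) with hj | hj
      · rw [dif_pos hj, dif_pos hj, if_neg (by omega)]
        abel
      · rw [dif_neg (by omega), dif_neg (by omega), hin, mdf_at]
        by_cases hjc : (j : ℕ) = (c : ℕ) + (0 + 1)
        · have hfc : (⟨(j : ℕ) - 1, by omega⟩ : Fin k) = c :=
            Fin.ext (by simp only [Fin.val_mk]; omega)
          rw [hfc, if_pos rfl, if_pos hjc]
          abel
        · have hne : (⟨(j : ℕ) - 1, by have := j.isLt; omega⟩ : Fin k) ≠ c := by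
            intro hcon
            have := congrArg Fin.val hcon
            simp only [Fin.val_mk] at this
            omega
          rw [if_neg hne, if_neg hjc]
          abel
    · -- inductive step
      have hd1 : 1 ≤ d := by omega
      have hcd' : (c : ℕ) + d ≤ k := by omega
      have hRsame : sts (mdf F t a c w) y (t + d) (Fin.last k) = sts F y (t + d) (Fin.last k) := by
        rw [ih hd1 hcd' (Fin.last k), if_neg (by simp [Fin.last]; omega)]
        abel
      simp only [sts]
      rw [mdf_ne (by omega)]
      simp only [tufnRound, hRsame]
      rcases Nat.eq_zero_or_pos (j : ℕ) with hj | hj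
      · rw [dif_pos hj, dif_pos hj, if_neg (by omega)]
        abel
      · have hjlt : (j : ℕ) - 1 < k + 1 := by have := j.isLt; omega
        rw [dif_neg (by omega), dif_neg (by omega), ih hd1 hcd' ⟨(j : ℕ) - 1, hjlt⟩]
        by_cases hjc : (j : ℕ) = (c : ℕ) + (d + 1)
        · rw [if_pos (by simp only [Fin.val_mk]; omega), if_pos hjc]
          abel
        · rw [if_neg (by simp only [Fin.val_mk]; omega), if_neg hjc]
          abel

end UFN

namespace UFN

variable {n k : ℕ}

def rotIdx (k i : ℕ) (j : Fin (k + 1)) : Fin (k + 1) :=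
  ⟨(if i ≤ (j : ℕ) then (j : ℕ) - i else (j : ℕ) + (k + 1) - i) % (k + 1),
    Nat.mod_lt _ k.succ_pos⟩

theorem rotIdx_val {i : ℕ} (hi : i ≤ k + 1) (j : Fin (k + 1)) :
    (rotIdx k i j : ℕ) = if i ≤ (j : ℕ) then (j : ℕ) - i else (j : ℕ) + (k + 1) - i := by
  have hj := j.isLt
  simp only [rotIdx]
  exact Nat.mod_eq_of_lt (by split_ifs <;> omega)

theorem sts_rot (F : ℕ → TgtRF n k) (x y : St n k) :
    ∀ i, i ≤ k + 1 → (∀ s < i, RL F x s = RL F y s) → ∀ j : Fin (k + 1),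
      sts F x i j - sts F y i j = x (rotIdx k i j) - y (rotIdx k i j) := by
  intro i
  induction i with
  | zero =>
    intro _ _ j
    have hidx : rotIdx k 0 j = j := Fin.ext (by rw [rotIdx_val (by omega)]; simp)
    rw [hidx]
    rfl
  | succ i ih =>
    intro hi h j
    have hIH := ih (by omega) (fun s hs => h s (by omega))
    have hR : sts F x i (Fin.last k) = sts F y i (Fin.last k) := h i (by omega)
    have hj := j.isLt
    simp only [sts, tufnRound]
    rcases Nat.eq_zero_or_pos (j : ℕ) with hj0 | hj0
    · rw [dif_pos hj0, dif_pos hj0]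
      have hidx : rotIdx k i (Fin.last k) = rotIdx k (i + 1) j := by
        apply Fin.ext
        rw [rotIdx_val (by omega), rotIdx_val (by omega)]
        simp only [Fin.val_last]
        split_ifs <;> omega
      rw [← hidx]
      exact hIH (Fin.last k)
    · rw [dif_neg (by omega), dif_neg (by omega), hR]
      have hlt : (j : ℕ) - 1 < k + 1 := by omega
      have hidx : rotIdx k i ⟨(j : ℕ) - 1, hlt⟩ = rotIdx k (i + 1) j := by
        apply Fin.ext
        rw [rotIdx_val (by omega), rotIdx_val (by omega)]
        simp only [Fin.val_mk]
        split_ifs <;> omega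
      have := hIH ⟨(j : ℕ) - 1, hlt⟩
      rw [hidx] at this
      rw [add_sub_add_right_eq_sub]
      exact this

theorem eq_of_all_RL_eq (F : ℕ → TgtRF n k) (x y : St n k)
    (h : ∀ s ≤ k, RL F x s = RL F y s) : x = y := by
  funext j
  have hj := j.isLt
  have hrot := sts_rot F x y (k - (j : ℕ)) (by omega) (fun s hs => h s (by omega)) (Fin.last k)
  have hR : RL F x (k - (j : ℕ)) = RL F y (k - (j : ℕ)) := h _ (by omega)
  have hidx : rotIdx k (k - (j : ℕ)) (Fin.last k) = j := by
    apply Fin.ext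
    rw [rotIdx_val (by omega)]
    simp only [Fin.val_last]
    split_ifs <;> omega
  rw [hidx] at hrot
  have h0 : sts F x (k - (j : ℕ)) (Fin.last k) - sts F y (k - (j : ℕ)) (Fin.last k) = 0 := by
    rw [show sts F x (k - (j : ℕ)) (Fin.last k) = RL F x (k - (j : ℕ)) from rfl,
      show sts F y (k - (j : ℕ)) (Fin.last k) = RL F y (k - (j : ℕ)) from rfl, hR]
    exact sub_self _
  exact sub_eq_zero.mp (hrot ▸ h0)

theorem sts_add (F : ℕ → TgtRF n k) (x : St n k) (t : ℕ) :
    ∀ s, sts F x (t + s) = sts (fun j => F (t + j)) (sts F x t) s := by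
  intro s
  induction s with
  | zero => rfl
  | succ s ih =>
    rw [← Nat.add_assoc]
    simp only [sts]
    rw [ih]

theorem RL0_eq_of (F : ℕ → TgtRF n k) (x y : St n k)
    (h : ∀ s, 1 ≤ s → s ≤ k → RL F x s = RL F y s)
    (hcol : RL F x (k + 1) = RL F y (k + 1)) : x (Fin.last k) = y (Fin.last k) := by
  have hx' : ∀ s, sts (fun j => F (1 + j)) (sts F x 1) s = sts F x (1 + s) :=
    fun s => (sts_add F x 1 s).symm
  have hy' : ∀ s, sts (fun j => F (1 + j)) (sts F y 1) s = sts F y (1 + s) :=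
    fun s => (sts_add F y 1 s).symm
  have hrot := sts_rot (fun j => F (1 + j)) (sts F x 1) (sts F y 1) k (by omega)
    (fun s hs => by
      show sts _ _ s (Fin.last k) = sts _ _ s (Fin.last k)
      rw [hx' s, hy' s]
      exact h (1 + s) (by omega) (by omega)) (Fin.last k)
  have hidx : (rotIdx k k (Fin.last k) : ℕ) = 0 := by
    rw [rotIdx_val (by omega)]
    simp only [Fin.val_last]
    split_ifs <;> omega
  have h0 : sts (fun j => F (1 + j)) (sts F x 1) k (Fin.last k) -
      sts (fun j => F (1 + j)) (sts F y 1) k (Fin.last k) = 0 := by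
    rw [hx' k, hy' k]
    have h1k : 1 + k = k + 1 := by omega
    rw [h1k]
    exact sub_eq_zero.mpr hcol
  rw [h0] at hrot
  have hx0 : sts F x 1 (rotIdx k k (Fin.last k)) = x (Fin.last k) := by
    show tufnRound (F 0) x _ = _
    simp only [tufnRound]
    rw [dif_pos hidx]
  have hy0 : sts F y 1 (rotIdx k k (Fin.last k)) = y (Fin.last k) := by
    show tufnRound (F 0) y _ = _
    simp only [tufnRound]
    rw [dif_pos hidx]
  rw [hx0, hy0] at hrot
  exact (sub_eq_zero.mp hrot.symm)

theorem exists_diff (hk : 1 ≤ k) {i : ℕ} (hik : k ≤ i) (hik2 : i ≤ k + 1)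
    (F : ℕ → TgtRF n k) (x y : St n k) (hne : x ≠ y) (hcol : RL F x i = RL F y i) :
    ∃ s, i - k ≤ s ∧ s ≤ i - 1 ∧ RL F x s ≠ RL F y s := by
  by_contra hcon
  push_neg at hcon
  rcases (by omega : i = k ∨ i = k + 1) with h | h
  · refine hne (eq_of_all_RL_eq F x y (fun s hs => ?_))
    rcases (by omega : s ≤ i - 1 ∨ s = i) with h' | h'
    · exact hcon s (by omega) h'
    · rw [h']; exact hcol
  · rw [h] at hcol
    have h0 : RL F x 0 = RL F y 0 :=
      RL0_eq_of F x y (fun s h1 h2 => hcon s (by omega) (by omega)) hcol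
    refine hne (eq_of_all_RL_eq F x y (fun s hs => ?_))
    rcases Nat.eq_zero_or_pos s with h' | h'
    · rw [h']; exact h0
    · exact hcon s (by omega) (by omega)

theorem findGreatest_congr {P Q : ℕ → Prop} [DecidablePred P] [DecidablePred Q] (b : ℕ)
    (h : ∀ s ≤ b, P s ↔ Q s) : Nat.findGreatest P b = Nat.findGreatest Q b := by
  induction b with
  | zero => rfl
  | succ b ih =>
    rw [Nat.findGreatest_succ, Nat.findGreatest_succ]
    by_cases hp : P (b + 1)
    · rw [if_pos hp, if_pos ((h _ le_rfl).mp hp)]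
    · rw [if_neg hp, if_neg (fun hq => hp ((h _ le_rfl).mpr hq)),
        ih (fun s hs => h s (by omega))]

end UFN

namespace UFN

variable {n k : ℕ}

/-- modify a tuple of round functions at one point of one function -/
def mdfS (F : Fin (k + 2) → TgtRF n k) (t : Fin (k + 2)) (a : Blk n) (c : Fin k) (w : Blk n) :
    Fin (k + 2) → TgtRF n k :=
  Function.update F t (fun R d => if R = a ∧ d = c then w else F t R d)

theorem mdfS_self (F : Fin (k + 2) → TgtRF n k) (t : Fin (k + 2)) (a : Blk n) (c : Fin k) :
    mdfS F t a c (F t a c) = F := by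
  funext j
  by_cases hjt : j = t
  · subst hjt
    rw [mdfS, Function.update_self]
    funext R d
    split_ifs with h
    · rw [h.1, h.2]
    · rfl
  · rw [mdfS, Function.update_of_ne hjt]

theorem mdfS_mdfS (F : Fin (k + 2) → TgtRF n k) (t : Fin (k + 2)) (a : Blk n) (c : Fin k)
    (w v : Blk n) : mdfS (mdfS F t a c w) t a c v = mdfS F t a c v := by
  funext j
  by_cases hjt : j = t
  · subst hjt
    simp only [mdfS, Function.update_self]
    funext R d
    split_ifs with h <;> rfl
  · simp only [mdfS, Function.update_of_ne hjt]

theorem mdfS_at (F : Fin (k + 2) → TgtRF n k) (t : Fin (k + 2)) (a : Blk n) (c : Fin k)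
    (w : Blk n) : mdfS F t a c w t a c = w := by
  simp [mdfS, Function.update_self]

theorem FN_mdfS (F : Fin (k + 2) → TgtRF n k) (t : Fin (k + 2)) (a : Blk n) (c : Fin k)
    (w : Blk n) : FN (mdfS F t a c w) = mdf (FN F) (t : ℕ) a c w := by
  have hFNt : ∀ G : Fin (k + 2) → TgtRF n k, FN G (t : ℕ) = G t := fun G => by
    simp only [FN, dif_pos t.isLt, Fin.eta]
  funext j
  by_cases hj : j < k + 2
  · by_cases hjt : j = (t : ℕ)
    · subst hjt
      rw [hFNt (mdfS F t a c w)]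
      show Function.update F t _ t = mdf (FN F) (t : ℕ) a c w (t : ℕ)
      rw [Function.update_self]
      simp [mdf, hFNt F]
    · have h1 : FN (mdfS F t a c w) j = mdfS F t a c w ⟨j, hj⟩ := by
        simp only [FN, dif_pos hj]
      have h2 : FN F j = F ⟨j, hj⟩ := by simp only [FN, dif_pos hj]
      rw [h1, mdf_ne hjt, h2, mdfS, Function.update_of_ne (fun hcon => hjt (congrArg Fin.val hcon))]
  · simp only [FN, dif_neg hj, mdf,
      if_neg (show j ≠ (t : ℕ) from fun hcon => hj (by rw [hcon]; exact t.isLt))]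

open Classical in
/-- the last round (before round `i`) where the two trajectories' last blocks differ -/
noncomputable def tOf (i : ℕ) (xp xq : St n k) (F : Fin (k + 2) → TgtRF n k) : ℕ :=
  Nat.findGreatest (fun s => RL (FN F) xp s ≠ RL (FN F) xq s) (i - 1)

open Classical in
theorem tOf_spec {i : ℕ} (xp xq : St n k) (F : Fin (k + 2) → TgtRF n k) {s : ℕ}
    (hs : s ≤ i - 1) (hP : RL (FN F) xp s ≠ RL (FN F) xq s) :
    (RL (FN F) xp (tOf i xp xq F) ≠ RL (FN F) xq (tOf i xp xq F)) ∧ s ≤ tOf i xp xq F := by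
  unfold tOf
  exact ⟨Nat.findGreatest_spec (P := fun s => RL (FN F) xp s ≠ RL (FN F) xq s) hs hP,
    Nat.le_findGreatest hs hP⟩

theorem tOf_le (i : ℕ) (xp xq : St n k) (F : Fin (k + 2) → TgtRF n k) :
    tOf i xp xq F ≤ i - 1 := Nat.findGreatest_le _

noncomputable def tF (i : ℕ) (xp xq : St n k) (F : Fin (k + 2) → TgtRF n k) : Fin (k + 2) :=
  ⟨tOf i xp xq F % (k + 2), Nat.mod_lt _ (by omega)⟩

noncomputable def cF (hk : 0 < k) (i : ℕ) (xp xq : St n k) (F : Fin (k + 2) → TgtRF n k) :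
    Fin k :=
  ⟨(tOf i xp xq F - (i - k)) % k, Nat.mod_lt _ hk⟩

noncomputable def aF (i : ℕ) (xp xq : St n k) (F : Fin (k + 2) → TgtRF n k) : Blk n :=
  RL (FN F) xp (tOf i xp xq F)

theorem tF_val {i : ℕ} (hik2 : i ≤ k + 1) (xp xq : St n k) (F : Fin (k + 2) → TgtRF n k) :
    (tF i xp xq F : ℕ) = tOf i xp xq F :=
  Nat.mod_eq_of_lt (by have := tOf_le i xp xq F; omega)

theorem cF_val (hk : 0 < k) {i : ℕ} (hik2 : i ≤ k + 1) (xp xq : St n k)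
    (F : Fin (k + 2) → TgtRF n k) :
    (cF hk i xp xq F : ℕ) = tOf i xp xq F - (i - k) :=
  Nat.mod_eq_of_lt (by have := tOf_le i xp xq F; omega)

noncomputable def psi (hk : 0 < k) (i : ℕ) (xp xq : St n k) (F : Fin (k + 2) → TgtRF n k)
    (w : Blk n) : Fin (k + 2) → TgtRF n k :=
  mdfS F (tF i xp xq F) (aF i xp xq F) (cF hk i xp xq F) w

noncomputable def rho (hk : 0 < k) (i : ℕ) (xp xq : St n k) (G : Fin (k + 2) → TgtRF n k) :
    (Fin (k + 2) → TgtRF n k) × Blk n :=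
  (mdfS G (tF i xp xq G) (aF i xp xq G) (cF hk i xp xq G)
      (G (tF i xp xq G) (aF i xp xq G) (cF hk i xp xq G) -
        (RL (FN G) xp i - RL (FN G) xq i)),
    G (tF i xp xq G) (aF i xp xq G) (cF hk i xp xq G))

theorem recover (hk : 0 < k) {i : ℕ} (hik : k ≤ i) (hik2 : i ≤ k + 1)
    (xp xq : St n k) (hne : xp ≠ xq) (F : Fin (k + 2) → TgtRF n k)
    (hcol : RL (FN F) xp i = RL (FN F) xq i) (w : Blk n) :
    rho hk i xp xq (psi hk i xp xq F w) = (F, w) := by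
  classical
  set t := tOf i xp xq F with ht
  set a := aF i xp xq F with ha
  set c := cF hk i xp xq F with hc
  set G := psi hk i xp xq F w with hG
  have htl : t ≤ i - 1 := tOf_le i xp xq F
  obtain ⟨s, hs1, hs2, hs3⟩ := exists_diff hk hik hik2 (FN F) xp xq hne hcol
  have htP : RL (FN F) xp t ≠ RL (FN F) xq t := (tOf_spec xp xq F hs2 hs3).1
  have htik : i - k ≤ t := le_trans hs1 (tOf_spec xp xq F hs2 hs3).2
  have hcval : (c : ℕ) = t - (i - k) := cF_val hk hik2 xp xq F
  have hFNG : FN G = mdf (FN F) t a c w := by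
    rw [hG]
    show FN (mdfS F (tF i xp xq F) a c w) = _
    rw [FN_mdfS, tF_val hik2]
  have hya : RL (FN F) xp t = a := rfl
  have hE2 : ∀ s', sts (FN G) xq s' = sts (FN F) xq s' := by
    rw [hFNG]
    exact sts_mdf_of_ne (FN F) t a c w xq (Ne.symm htP)
  have hE2RL : ∀ s', RL (FN G) xq s' = RL (FN F) xq s' := fun s' => congrFun (hE2 s') _
  have hE1 : ∀ s' < i, RL (FN G) xp s' = RL (FN F) xp s' := by
    intro s' hs'
    rcases le_or_gt s' t with h | h
    · exact congrFun (by rw [hFNG]; exact sts_mdf_pre (FN F) t a c w xp s' h) (Fin.last k)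
    · show sts (FN G) xp s' (Fin.last k) = sts (FN F) xp s' (Fin.last k)
      rw [hFNG, show s' = t + (s' - t) from by omega,
        sts_mdf_main (FN F) t a c w xp hya (s' - t) (by omega) (by omega),
        if_neg (by rw [Fin.val_last, hcval]; omega)]
      exact add_zero _
  have hE3 : RL (FN G) xp i = RL (FN F) xp i + (w - FN F t a c) := by
    show sts (FN G) xp i (Fin.last k) = _
    rw [hFNG, show i = t + (i - t) from by omega,
      sts_mdf_main (FN F) t a c w xp hya (i - t) (by omega) (by omega),
      if_pos (by rw [Fin.val_last, hcval]; omega)]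
    rw [show t + (i - t) = i from by omega]
    rfl
  have htG : tOf i xp xq G = t := by
    rw [ht]
    unfold tOf
    exact findGreatest_congr (i - 1) (fun s' hs' => by
      rw [hE1 s' (by omega), hE2RL s'])
  have htFG : tF i xp xq G = tF i xp xq F := Fin.ext (by simp only [tF]; rw [htG])
  have hcFG : cF hk i xp xq G = cF hk i xp xq F := Fin.ext (by simp only [cF]; rw [htG])
  have haG : aF i xp xq G = a := by
    show RL (FN G) xp (tOf i xp xq G) = a
    rw [htG, hE1 t (by omega)]
    exact hya
  have hwv : G (tF i xp xq F) a c = w := by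
    rw [hG]
    exact mdfS_at F (tF i xp xq F) a c w
  have hFNt : FN F t = F (tF i xp xq F) := by
    have hvt : t = ((tF i xp xq F : Fin (k + 2)) : ℕ) :=
      ht.trans (tF_val hik2 xp xq F).symm
    rw [hvt]
    simp only [FN, dif_pos (tF i xp xq F).isLt, Fin.eta]
  have he : RL (FN G) xp i - RL (FN G) xq i = w - F (tF i xp xq F) a c := by
    rw [hE3, hE2RL i, hcol, hFNt]
    abel
  show (mdfS G (tF i xp xq G) (aF i xp xq G) (cF hk i xp xq G)
      (G (tF i xp xq G) (aF i xp xq G) (cF hk i xp xq G) -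
        (RL (FN G) xp i - RL (FN G) xq i)),
    G (tF i xp xq G) (aF i xp xq G) (cF hk i xp xq G)) = (F, w)
  rw [htFG, hcFG, haG, ← hc, hwv, he, sub_sub_cancel]
  rw [hG]
  show (mdfS (mdfS F (tF i xp xq F) a c w) (tF i xp xq F) a c _, _) = _
  rw [mdfS_mdfS, mdfS_self]

theorem key (hn : 1 ≤ n) (hk : 1 ≤ k) {i : ℕ} (hik : k ≤ i) (hik2 : i ≤ k + 1)
    (xp xq : St n k) (hne : xp ≠ xq) :
    (Finset.univ.filter (fun F : Fin (k + 2) → TgtRF n k =>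
      RL (FN F) xp i = RL (FN F) xq i)).card * 2 ^ n ≤
    Fintype.card (Fin (k + 2) → TgtRF n k) := by
  classical
  have hcard2 : (Finset.univ : Finset (Blk n)).card = 2 ^ n := by
    rw [Finset.card_univ, Fintype.card_fun]
    simp
  set B := Finset.univ.filter (fun F : Fin (k + 2) → TgtRF n k =>
      RL (FN F) xp i = RL (FN F) xq i) with hB
  have hinj : Set.InjOn (fun Fw : (Fin (k + 2) → TgtRF n k) × Blk n =>
      psi hk i xp xq Fw.1 Fw.2) ↑(B ×ˢ (Finset.univ : Finset (Blk n))) := by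
    rintro ⟨F₁, w₁⟩ h₁ ⟨F₂, w₂⟩ h₂ heq
    simp only [Finset.coe_product, Set.mem_prod, Finset.mem_coe, hB, Finset.mem_filter] at h₁ h₂
    have r₁ := recover hk hik hik2 xp xq hne F₁ h₁.1.2 w₁
    have r₂ := recover hk hik hik2 xp xq hne F₂ h₂.1.2 w₂
    simp only at heq
    rw [heq] at r₁
    exact (r₁.symm.trans r₂)
  calc B.card * 2 ^ n = (B ×ˢ (Finset.univ : Finset (Blk n))).card := by
        rw [Finset.card_product, hcard2]
    _ ≤ (Finset.univ : Finset (Fin (k + 2) → TgtRF n k)).card :=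
        Finset.card_le_card_of_injOn _ (fun _ _ => Finset.mem_univ _) hinj
    _ = Fintype.card _ := Finset.card_univ

end UFN

open scoped Classical in
/-- **Lemma 3.4.** For `m` distinct initial states and a uniformly random tuple
of `k+2` round functions of the `n:kn`-UFN, the probability of the BAD event — some round
`i ∈ {k, k+1}` and queries `p < q` whose last blocks collide, `R_p^i = R_q^i` — is at most
`m² / 2^n`. -/
theorem tufn_bad_event_probability (n k m : ℕ) (hn : 1 ≤ n) (hk : 1 ≤ k) (hm : 1 ≤ m)
    (x : Fin m → St n k) (hx : Function.Injective x) :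
    ((Finset.univ.filter (fun F : Fin (k + 2) → TgtRF n k =>
        ∃ i, ∃ _ : k ≤ i, ∃ h2 : i ≤ k + 1, ∃ p q : Fin m, p < q ∧
          tufnRun i (fun t => F (Fin.castLE (by omega) t)) (x p) (Fin.last k) =
          tufnRun i (fun t => F (Fin.castLE (by omega) t)) (x q) (Fin.last k))).card : ℝ) /
      (Fintype.card (Fin (k + 2) → TgtRF n k) : ℝ) ≤
      (m : ℝ) ^ 2 / (2 : ℝ) ^ n := by
  classical
  set S := Finset.univ.filter (fun F : Fin (k + 2) → TgtRF n k =>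
      ∃ i, ∃ _ : k ≤ i, ∃ h2 : i ≤ k + 1, ∃ p q : Fin m, p < q ∧
        tufnRun i (fun t => F (Fin.castLE (by omega) t)) (x p) (Fin.last k) =
        tufnRun i (fun t => F (Fin.castLE (by omega) t)) (x q) (Fin.last k)) with hS
  set D := (Finset.univ : Finset (Fin m)).offDiag with hD
  set N := Fintype.card (Fin (k + 2) → TgtRF n k) with hN
  set Ev : Fin m × Fin m → Finset (Fin (k + 2) → TgtRF n k) := fun z =>
    Finset.univ.filter (fun F =>
      UFN.RL (UFN.FN F) (x z.1) (if z.1 < z.2 then k else k + 1) =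
      UFN.RL (UFN.FN F) (x z.2) (if z.1 < z.2 then k else k + 1)) with hEv
  have hsub : S ⊆ D.biUnion Ev := by
    intro F hF
    rw [hS, Finset.mem_filter] at hF
    obtain ⟨-, i, h1, h2, p, q, hpq, hcol⟩ := hF
    have hcol' : UFN.RL (UFN.FN F) (x p) i = UFN.RL (UFN.FN F) (x q) i := by
      have e1 := UFN.run_eq_FN (n := n) (k := k) (show i ≤ k + 2 by omega) F (x p)
      have e2 := UFN.run_eq_FN (n := n) (k := k) (show i ≤ k + 2 by omega) F (x q)
      exact (congrFun e1 (Fin.last k)).symm.trans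
        (hcol.trans (congrFun e2 (Fin.last k)))
    rw [Finset.mem_biUnion]
    rcases (by omega : i = k ∨ i = k + 1) with hi | hi
    · refine ⟨(p, q), Finset.mem_offDiag.mpr ⟨Finset.mem_univ _, Finset.mem_univ _, hpq.ne⟩, ?_⟩
      rw [hEv]
      simp only [Finset.mem_filter, Finset.mem_univ, true_and]
      rw [hi] at hcol'
      rw [if_pos hpq]
      exact hcol'
    · refine ⟨(q, p), Finset.mem_offDiag.mpr ⟨Finset.mem_univ _, Finset.mem_univ _, hpq.ne'⟩, ?_⟩
      rw [hEv]
      simp only [Finset.mem_filter, Finset.mem_univ, true_and]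
      rw [hi] at hcol'
      rw [if_neg (by exact fun hcon => absurd hpq (lt_asymm hcon))]
      exact hcol'.symm
  have hkey : ∀ z ∈ D, (Ev z).card * 2 ^ n ≤ N := by
    intro z hz
    have hzne : z.1 ≠ z.2 := (Finset.mem_offDiag.mp hz).2.2
    have hne : x z.1 ≠ x z.2 := fun hcon => hzne (hx hcon)
    exact UFN.key hn hk (i := if z.1 < z.2 then k else k + 1)
      (by split_ifs <;> omega) (by split_ifs <;> omega) (x z.1) (x z.2) hne
  have hnat : S.card * 2 ^ n ≤ m ^ 2 * N := by
    have h1 : S.card ≤ ∑ z ∈ D, (Ev z).card :=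
      le_trans (Finset.card_le_card hsub) (Finset.card_biUnion_le)
    have h2 : S.card * 2 ^ n ≤ ∑ z ∈ D, (Ev z).card * 2 ^ n := by
      rw [← Finset.sum_mul]
      exact Nat.mul_le_mul_right _ h1
    have h3 : ∑ z ∈ D, (Ev z).card * 2 ^ n ≤ ∑ _z ∈ D, N := Finset.sum_le_sum hkey
    have h4 : ∑ _z ∈ D, N = D.card * N := by
      rw [Finset.sum_const, smul_eq_mul]
    have h5 : D.card ≤ m ^ 2 := by
      rw [hD, Finset.offDiag_card, Finset.card_univ, Fintype.card_fin, pow_two]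
      omega
    calc S.card * 2 ^ n ≤ ∑ z ∈ D, (Ev z).card * 2 ^ n := h2
      _ ≤ ∑ _z ∈ D, N := h3
      _ = D.card * N := h4
      _ ≤ m ^ 2 * N := Nat.mul_le_mul_right _ h5
  have hNpos : (0 : ℝ) < (N : ℝ) := by
    have : 0 < N := Fintype.card_pos
    exact_mod_cast this
  have h2npos : (0 : ℝ) < (2 : ℝ) ^ n := by positivity
  rw [div_le_div_iff₀ hNpos h2npos]
  have := (Nat.cast_le (α := ℝ)).mpr hnat
  push_cast at this
  calc (S.card : ℝ) * (2 : ℝ) ^ n ≤ (m : ℝ) ^ 2 * (N : ℝ) := this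
    _ = (m : ℝ) ^ 2 * (N : ℝ) := rfl
end

section
/- Let n, k ≥ 1, let S = (Fin (k+1)) → (Fin n → ZMod 2), and fix any x ∈ S. For a uniformly random permutation π of S, the probability that the XOR of all k+1 blocks of π(x) equals the XOR of all k+1 blocks of x is exactly 1/2^n. Equivalently, the number of permutations π of S with ⊕_{i} (π(x))_i = ⊕_i x_i, multiplied by 2^n, equals the total number of permutations of S. -/
lemma fiber_card {S : Type*} [Fintype S] [DecidableEq S] (x y : S) :
    (Finset.univ.filter (fun π : Equiv.Perm S => π x = y)).card
      = (Finset.univ.filter (fun π : Equiv.Perm S => π x = x)).card := by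
  apply Finset.card_bij (fun π _ => Equiv.swap x y * π)
  · intro π hπ
    simp only [Finset.mem_filter, Finset.mem_univ, true_and] at hπ ⊢
    simp [Equiv.Perm.mul_apply, hπ]
  · intro a _ b _ h
    exact mul_left_cancel h
  · intro σ hσ
    simp only [Finset.mem_filter, Finset.mem_univ, true_and] at hσ
    refine ⟨Equiv.swap x y * σ, ?_, ?_⟩
    · simp [Equiv.Perm.mul_apply, hσ]
    · rw [← mul_assoc, Equiv.swap_mul_self, one_mul]

def subtypeEquiv (n k : ℕ) (c : Blk n) :
    {y : St n k // ∑ i, y i = c} ≃ (Fin k → Blk n) where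
  toFun y := fun i => y.1 i.succ
  invFun g := ⟨Fin.cons (c - ∑ i, g i) g, by
    rw [Fin.sum_cons]; exact sub_add_cancel c _⟩
  left_inv := by
    rintro ⟨y, hy⟩
    apply Subtype.ext
    show Fin.cons (c - ∑ i : Fin k, y i.succ) (fun i => y i.succ) = y
    have h0 : c - ∑ i : Fin k, y i.succ = y 0 := by
      rw [← hy, Fin.sum_univ_succ]
      exact add_sub_cancel_right _ _
    rw [h0]
    exact Fin.cons_self_tail y
  right_inv := by
    intro g
    funext i
    simp [Fin.cons_succ]

/-- Fix a state `x`.  For a uniformly random permutation `π` of the state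
space, the probability that the XOR of all `k+1` blocks of `π x` equals the XOR of all `k+1`
blocks of `x` is exactly `1/2^n`; equivalently, the number of permutations `π` with
`⊕ᵢ (π x) i = ⊕ᵢ x i`, multiplied by `2^n`, equals the total number of permutations. -/
theorem random_perm_block_xor_relation (n k : ℕ) (hn : 1 ≤ n) (hk : 1 ≤ k) (x : St n k) :
    (((Finset.univ.filter (fun π : Equiv.Perm (St n k) =>
          ∑ i : Fin (k + 1), π x i = ∑ i : Fin (k + 1), x i)).card : ℝ) /
        (Fintype.card (Equiv.Perm (St n k)) : ℝ) = 1 / (2 : ℝ) ^ n) ∧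
    (Finset.univ.filter (fun π : Equiv.Perm (St n k) =>
        ∑ i : Fin (k + 1), π x i = ∑ i : Fin (k + 1), x i)).card * 2 ^ n =
      Fintype.card (Equiv.Perm (St n k)) := by
  classical
  have hN : Fintype.card (Equiv.Perm (St n k)) = Fintype.card (St n k)
      * (Finset.univ.filter (fun π : Equiv.Perm (St n k) => π x = x)).card := by
    rw [← Finset.card_univ (α := Equiv.Perm (St n k))]
    rw [Finset.card_eq_sum_card_fiberwise
      (f := fun π : Equiv.Perm (St n k) => π x) (t := Finset.univ)
      (fun a _ => Finset.mem_univ _)]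
    rw [Finset.sum_congr rfl (fun y _ => fiber_card x y)]
    simp [Finset.card_univ, mul_comm]
  have hA : (Finset.univ.filter (fun π : Equiv.Perm (St n k) =>
        ∑ i : Fin (k + 1), π x i = ∑ i : Fin (k + 1), x i)).card
      = (Finset.univ.filter (fun y : St n k =>
          ∑ i, y i = ∑ i : Fin (k + 1), x i)).card
        * (Finset.univ.filter (fun π : Equiv.Perm (St n k) => π x = x)).card := by
    rw [Finset.card_eq_sum_card_fiberwise
      (f := fun π : Equiv.Perm (St n k) => π x)
      (t := Finset.univ.filter (fun y : St n k => ∑ i, y i = ∑ i : Fin (k + 1), x i))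
      (by intro π hπ
          simp only [Finset.mem_coe, Finset.mem_filter, Finset.mem_univ, true_and] at hπ ⊢
          exact hπ)]
    have hstep : ∀ y ∈ Finset.univ.filter (fun y : St n k =>
          ∑ i, y i = ∑ i : Fin (k + 1), x i),
        ((Finset.univ.filter (fun π : Equiv.Perm (St n k) =>
          ∑ i : Fin (k + 1), π x i = ∑ i : Fin (k + 1), x i)).filter
            (fun π => π x = y)).card
          = (Finset.univ.filter (fun π : Equiv.Perm (St n k) => π x = x)).card := by
      intro y hy
      simp only [Finset.mem_filter, Finset.mem_univ, true_and] at hy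
      rw [Finset.filter_filter]
      have : (Finset.univ.filter (fun π : Equiv.Perm (St n k) =>
          (∑ i : Fin (k + 1), π x i = ∑ i : Fin (k + 1), x i) ∧ π x = y))
          = Finset.univ.filter (fun π : Equiv.Perm (St n k) => π x = y) := by
        apply Finset.filter_congr
        intro π _
        constructor
        · rintro ⟨_, h⟩; exact h
        · intro h; exact ⟨by rw [h]; exact hy, h⟩
      rw [this, fiber_card]
    rw [Finset.sum_congr rfl hstep, Finset.sum_const, smul_eq_mul]
  have h2 : Fintype.card (Blk n) = 2 ^ n := by
    rw [Fintype.card_fun]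
    simp [ZMod.card]
  have hM : (Finset.univ.filter (fun y : St n k =>
        ∑ i, y i = ∑ i : Fin (k + 1), x i)).card * 2 ^ n
      = Fintype.card (St n k) := by
    rw [← Fintype.card_subtype,
      Fintype.card_congr (subtypeEquiv n k (∑ i : Fin (k + 1), x i)),
      Fintype.card_fun (α := Fin k), Fintype.card_fun (α := Fin (k + 1)),
      h2, Fintype.card_fin, Fintype.card_fin, ← pow_succ]
  have key : (Finset.univ.filter (fun π : Equiv.Perm (St n k) =>
        ∑ i : Fin (k + 1), π x i = ∑ i : Fin (k + 1), x i)).card * 2 ^ n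
      = Fintype.card (Equiv.Perm (St n k)) := by
    rw [hA, hN, ← hM]; ring
  refine ⟨?_, key⟩
  have hpos : (Fintype.card (Equiv.Perm (St n k)) : ℝ) ≠ 0 := by
    have := Fintype.card_pos (α := Equiv.Perm (St n k))
    positivity
  have key' : ((Finset.univ.filter (fun π : Equiv.Perm (St n k) =>
        ∑ i : Fin (k + 1), π x i = ∑ i : Fin (k + 1), x i)).card : ℝ) * 2 ^ n
      = (Fintype.card (Equiv.Perm (St n k)) : ℝ) := by
    exact_mod_cast congrArg (Nat.cast : ℕ → ℝ) key
  rw [div_eq_div_iff hpos (by positivity)]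
  linarith [key']
end

section
/- Let k ≥ 1 and let A be the (k+1) × (k+1) matrix over ZMod 2 indexed by Fin (k+1) with A i j = 0 if (i : ℕ) + (j : ℕ) = k and A i j = 1 otherwise (zeros exactly on the anti-diagonal, ones elsewhere). Then A is invertible (equivalently det A = 1 in ZMod 2) if and only if k is odd. -/
/-- **matrix from the proof of Lemma 4.1.** Let `A` be the
`(k+1) × (k+1)` matrix over `ZMod 2` with zeros exactly on the anti-diagonal
(`A i j = 0` iff `i + j = k`) and ones elsewhere.  Then `A` is invertible
(equivalently `det A = 1` in `ZMod 2`) if and only if `k` is odd. -/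
theorem antidiagonal_zero_matrix_invertible_iff_odd (k : ℕ) (hk : 1 ≤ k)
    (A : Matrix (Fin (k + 1)) (Fin (k + 1)) (ZMod 2))
    (hA : ∀ i j, A i j = if (i : ℕ) + (j : ℕ) = k then 0 else 1) :
    IsUnit A ↔ Odd k := by
  have hfact : A = (Fin.revPerm.permMatrix (ZMod 2)) *
      (1 + Matrix.replicateCol Unit (fun _ : Fin (k+1) => (1 : ZMod 2)) *
        Matrix.replicateRow Unit (fun _ : Fin (k+1) => (1 : ZMod 2))) := by
    ext i j
    rw [hA]
    simp only [Matrix.mul_apply, Matrix.add_apply, Matrix.one_apply,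
      Matrix.mul_apply, Matrix.replicateCol_apply, Matrix.replicateRow_apply,
      Equiv.Perm.permMatrix, PEquiv.toMatrix_apply, Equiv.toPEquiv_apply,
      Option.mem_def, Option.some.injEq]
    rw [Finset.sum_eq_single (Fin.revPerm i)]
    · simp only [Fin.revPerm_apply, if_pos rfl, one_mul]
      have hrev : (Fin.rev i = j) ↔ ((i : ℕ) + (j : ℕ) = k) := by
        constructor
        · rintro rfl; simp [Fin.val_rev]; omega
        · intro h; ext; simp [Fin.val_rev]; omega
      by_cases h : (i : ℕ) + (j : ℕ) = k
      · rw [if_pos h, if_pos (hrev.mpr h)]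
        simp [Finset.card_univ]
        decide
      · rw [if_neg h, if_neg (fun e => h (hrev.mp e))]
        simp
    · intro b _ hb
      rw [if_neg (by simpa [eq_comm] using hb.symm), zero_mul]
    · simp
  have hdet : A.det = (k : ZMod 2) := by
    rw [hfact, Matrix.det_mul, Matrix.det_permutation, Matrix.det_one_add_replicateCol_mul_replicateRow]
    have hs : ((Equiv.Perm.sign (Fin.revPerm : Equiv.Perm (Fin (k+1))) : ℤ) : ZMod 2) = 1 := by
      rcases Int.units_eq_one_or (Equiv.Perm.sign (Fin.revPerm : Equiv.Perm (Fin (k+1)))) with h | h <;>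
        rw [h] <;> decide
    rw [hs, one_mul]
    simp [dotProduct, Finset.card_univ]
    ring_nf
    rw [show ((2:ZMod 2) = 0) from rfl]
    ring
  rw [Matrix.isUnit_iff_isUnit_det, hdet, isUnit_iff_ne_zero, Ne,
    ZMod.natCast_eq_zero_iff, Nat.two_dvd_ne_zero, Nat.odd_iff]
end

section
/- Let n ≥ 1, k ≥ 1, and let V = Fin n → ZMod 2. Define T : (Fin (k+1) → V) → (Fin (k+1) → V) by (T x) i = ⊕_{j : (i : ℕ) + (j : ℕ) ≠ k} x j (the XOR of all coordinates of x except the anti-diagonal partner of i). Then T is bijective if and only if k is odd. -/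
/-- **core linear algebra of Lemma 4.1.** Define
`T : (Fin (k+1) → Blk n) → (Fin (k+1) → Blk n)` by
`(T x) i = ⊕_{j : i + j ≠ k} x j` (the XOR of all coordinates of `x` except the
anti-diagonal partner of `i`).  Then `T` is bijective if and only if `k` is odd. -/
theorem xor_except_antidiagonal_bijective_iff_odd (n k : ℕ) (hn : 1 ≤ n) (hk : 1 ≤ k) :
    Function.Bijective
      (fun (x : Fin (k + 1) → Blk n) (i : Fin (k + 1)) =>
        ∑ j ∈ Finset.univ.filter (fun j : Fin (k + 1) => (i : ℕ) + (j : ℕ) ≠ k), x j) ↔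
      Odd k := by
  set T : (Fin (k+1) → Blk n) → (Fin (k+1) → Blk n) :=
    fun x i => ∑ j ∈ Finset.univ.filter (fun j : Fin (k + 1) => (i : ℕ) + (j : ℕ) ≠ k), x j
    with hT
  have htwo : ∀ y : Blk n, y + y = 0 := by
    intro y; funext t
    simp only [Pi.add_apply, Pi.zero_apply]
    exact CharTwo.add_self_eq_zero (y t)
  have hnsmul_even : ∀ (m : ℕ), Even m → ∀ y : Blk n, m • y = 0 := by
    rintro m ⟨c, rfl⟩ y
    rw [add_nsmul]
    exact htwo _
  have hnsmul_odd : ∀ (m : ℕ), Odd m → ∀ y : Blk n, m • y = y := by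
    rintro m ⟨c, rfl⟩ y
    rw [add_nsmul, one_nsmul, two_mul, add_nsmul, htwo (c • y), zero_add]
  have key : ∀ x i, T x i = (∑ j, x j) + x i.rev := by
    intro x i
    have hset : Finset.univ.filter (fun j : Fin (k+1) => (i:ℕ)+(j:ℕ) ≠ k)
        = Finset.univ.erase i.rev := by
      ext j
      simp only [Finset.mem_filter, Finset.mem_univ, true_and, Finset.mem_erase, and_true]
      have hi := i.isLt
      have hj := j.isLt
      constructor
      · intro h hj'; apply h; subst hj'; rw [Fin.val_rev]; omega
      · intro h hsum; apply h; apply Fin.ext; rw [Fin.val_rev]; omega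
    have hs := Finset.sum_erase_add Finset.univ x (Finset.mem_univ i.rev)
    rw [hT]
    simp only [hset]
    rw [← hs, add_assoc, htwo, add_zero]
  have hsum : ∀ x, (∑ i, T x i) = (k+1) • (∑ j, x j) + (∑ j, x j) := by
    intro x
    simp only [key]
    rw [Finset.sum_add_distrib, Finset.sum_const, Finset.card_univ, Fintype.card_fin]
    congr 1
    exact Fintype.sum_bijective Fin.rev Fin.rev_involutive.bijective _ _ (fun i => rfl)
  constructor
  · intro hbij
    by_contra hodd
    have hkeven : Even k := Nat.not_odd_iff_even.mp hodd
    have hk1odd : Odd (k+1) := Even.add_one hkeven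
    set y : Fin (k+1) → Blk n := fun i => if i = 0 then (fun _ => 1) else 0 with hy
    obtain ⟨x, hx⟩ := hbij.surjective y
    have hsy : (∑ i, y i) = (fun _ => (1 : ZMod 2)) := by
      rw [hy]
      rw [Finset.sum_ite_eq' Finset.univ (0 : Fin (k+1)) (fun _ => (fun _ => (1 : ZMod 2)))]
      simp
    have h0 : (∑ i, T x i) = 0 := by
      rw [hsum, hnsmul_odd _ hk1odd, htwo]
    rw [hx, hsy] at h0
    have := congrFun h0 ⟨0, hn⟩
    simp at this
  · intro hkodd
    have hke : Even (k+1) := Odd.add_one hkodd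
    have hinv : ∀ x, T (T x) = x := by
      intro x; funext i
      rw [key, hsum, key, hnsmul_even _ hke, zero_add, Fin.rev_rev, ← add_assoc,
        htwo, zero_add]
    exact Function.bijective_iff_has_inverse.mpr ⟨T, hinv, hinv⟩
end
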